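/- arXiv:1907.11765 — 4 statements merged into one kernel-verified Lean document; each statement's English description precedes it below -/
import Mathlib

section
/- Suppose κ is a singular cardinal with cf(κ) = ρ and 2^ρ ≤ κ. Let ⟨μ_i : i < ρ⟩ be an increasing sequence of cardinals cofinal in κ such that each μ_i carries a μ_i-complete uniform ultrafilter U_i which has an almost-decreasing generating sequence of regular length θ_i. Let ⟨f_α : α < σ⟩ be a scale in ∏_{i<ρ} μ_i with σ regular and κ < σ, and let ⟨g_β : β < τ⟩ be a scale in ∏_{i<ρ} θ_i with τ regular and σ ≤ τ. Then there exists a uniform ultrafilter U on κ such that Ch(U) = τ. -/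
universe u

open Cardinal Set

/-- `A ⊆* B` below the cardinal `κ`: the difference `A \ B` is bounded below `κ`
(where `κ` is identified with its set of ordinals `Set.Iio κ.ord`). -/
def AlmostSub (κ : Cardinal.{u}) (A B : Set Ordinal.{u}) : Prop :=
  ∃ β, β < κ.ord ∧ A \ B ⊆ Set.Iio β

/-- An ultrafilter on the cardinal `κ`, identified with its set of ordinals `Set.Iio κ.ord`. -/
structure UltrafilterOn (κ : Cardinal.{u}) : Type (u + 1) where
  sets : Set (Set Ordinal.{u})
  sets_subset : ∀ A ∈ sets, A ⊆ Set.Iio κ.ord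
  univ_mem : Set.Iio κ.ord ∈ sets
  superset_mem : ∀ A ∈ sets, ∀ B, B ⊆ Set.Iio κ.ord → A ⊆ B → B ∈ sets
  inter_mem : ∀ A ∈ sets, ∀ B ∈ sets, A ∩ B ∈ sets
  empty_not_mem : ∅ ∉ sets
  mem_or_compl_mem : ∀ A, A ⊆ Set.Iio κ.ord → A ∈ sets ∨ Set.Iio κ.ord \ A ∈ sets

namespace UltrafilterOn

variable {κ : Cardinal.{u}}

/-- A uniform ultrafilter: every member has cardinality `κ`. -/
def IsUniform (U : UltrafilterOn κ) : Prop :=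
  ∀ A ∈ U.sets, #A = Cardinal.lift.{u + 1, u} κ

/-- `κ`-completeness: `U` is closed under intersections of fewer than `κ` many of its members. -/
def IsComplete (U : UltrafilterOn κ) : Prop :=
  ∀ S : Set (Set Ordinal.{u}), S.Nonempty → S ⊆ U.sets →
    #S < Cardinal.lift.{u + 1, u} κ → ⋂₀ S ∈ U.sets

/-- Nonprincipal: no singleton is a member. -/
def IsNonprincipal (U : UltrafilterOn κ) : Prop :=
  ∀ β : Ordinal.{u}, {β} ∉ U.sets

/-- A base for `U`: a subfamily `B ⊆ U` such that every member of `U` almost contains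
a member of `B`. -/
def IsBase (U : UltrafilterOn κ) (B : Set (Set Ordinal.{u})) : Prop :=
  B ⊆ U.sets ∧ ∀ X ∈ U.sets, ∃ Y ∈ B, AlmostSub κ Y X

/-- The character of `U`: the least cardinality of a base for `U`. -/
noncomputable def char (U : UltrafilterOn κ) : Cardinal.{u + 1} :=
  sInf {c | ∃ B, U.IsBase B ∧ #B = c}

/-- `⟨A i : i < θord⟩` is an almost-decreasing generating sequence for `U`:
its entries are members of `U`, it is `⊆*`-decreasing, and its range is a base for `U`. -/
def IsADGenSeq (U : UltrafilterOn κ) (θord : Ordinal.{u})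
    (A : Ordinal.{u} → Set Ordinal.{u}) : Prop :=
  (∀ i, i < θord → A i ∈ U.sets) ∧
  (∀ i j, i ≤ j → j < θord → AlmostSub κ (A j) (A i)) ∧
  U.IsBase (A '' Set.Iio θord)

/-- A normal measure on `κ`: a `κ`-complete nonprincipal ultrafilter such that every
function regressive on a member of `U` is constant on a member of `U`. -/
def IsNormalMeasure (U : UltrafilterOn κ) : Prop :=
  U.IsComplete ∧ U.IsNonprincipal ∧
  ∀ f : Ordinal.{u} → Ordinal.{u},
    (∃ X ∈ U.sets, ∀ α ∈ X, f α < α) → ∃ Y ∈ U.sets, ∃ c, ∀ α ∈ Y, f α = c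

end UltrafilterOn

/-- `κ` is a measurable cardinal: it is uncountable and carries a `κ`-complete
nonprincipal ultrafilter. -/
def IsMeasurableCard (κ : Cardinal.{u}) : Prop :=
  ℵ₀ < κ ∧ ∃ U : UltrafilterOn κ, U.IsComplete ∧ U.IsNonprincipal

/-- `f <* g`: eventual (pointwise) domination below `ρord`. -/
def EvDomLt (ρord : Ordinal.{u}) (f g : Ordinal.{u} → Ordinal.{u}) : Prop :=
  ∃ i₀, i₀ < ρord ∧ ∀ i, i₀ ≤ i → i < ρord → f i < g i

/-- Membership in the product `∏_{i < ρord} lam i` (of cardinals `lam i`). -/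
def InProd (ρord : Ordinal.{u}) (lam : Ordinal.{u} → Cardinal.{u})
    (f : Ordinal.{u} → Ordinal.{u}) : Prop :=
  ∀ i, i < ρord → f i < (lam i).ord

/-- `⟨g η : η < ν⟩` is a scale of length `ν` in `∏_{i < ρord} lam i`:
a `<*`-increasing and `<*`-cofinal sequence in the product. -/
def IsScale (ρord : Ordinal.{u}) (lam : Ordinal.{u} → Cardinal.{u}) (ν : Cardinal.{u})
    (g : Ordinal.{u} → Ordinal.{u} → Ordinal.{u}) : Prop :=
  (∀ η, η < ν.ord → InProd ρord lam (g η)) ∧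
  (∀ η₁ η₂, η₁ < η₂ → η₂ < ν.ord → EvDomLt ρord (g η₁) (g η₂)) ∧
  ∀ f, InProd ρord lam f → ∃ η, η < ν.ord ∧ EvDomLt ρord f (g η)

/-- `supBelow μ i = sup_{i' < i} μ i'`. -/
noncomputable def supBelow (μ : Ordinal.{u} → Cardinal.{u}) (i : Ordinal.{u}) : Cardinal.{u} :=
  sSup {c | ∃ i', i' < i ∧ c = μ i'}

-- helpers
theorem almostSub_trans {ν : Cardinal.{u}} {A B C : Set Ordinal.{u}}
    (h1 : AlmostSub ν A B) (h2 : AlmostSub ν B C) : AlmostSub ν A C := by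
  obtain ⟨b1, hb1, hs1⟩ := h1
  obtain ⟨b2, hb2, hs2⟩ := h2
  refine ⟨max b1 b2, max_lt hb1 hb2, ?_⟩
  intro x hx
  rcases hx with ⟨hxA, hxC⟩
  simp only [Set.mem_Iio]
  by_cases hB : x ∈ B
  · exact lt_of_lt_of_le (hs2 ⟨hB, hxC⟩) (le_max_right _ _)
  · exact lt_of_lt_of_le (hs1 ⟨hxA, hB⟩) (le_max_left _ _)

theorem mk_le_of_subset_Iio {S : Set Ordinal.{u}} {b : Ordinal.{u}}
    (h : S ⊆ Set.Iio b) : #S ≤ Cardinal.lift.{u+1, u} b.card := by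
  calc #S ≤ #(Set.Iio b) := Cardinal.mk_le_mk_of_subset h
  _ = Cardinal.lift.{u+1, u} b.card := Ordinal.mk_Iio_ordinal b

theorem UltrafilterOn.not_bounded {ν : Cardinal.{u}} {U : UltrafilterOn ν}
    (hU : U.IsUniform) {X : Set Ordinal.{u}} (hX : X ∈ U.sets) {b : Ordinal.{u}}
    (hb : b < ν.ord) (hsub : X ⊆ Set.Iio b) : False := by
  have h1 : #X = Cardinal.lift.{u+1,u} ν := hU X hX
  have h2 := mk_le_of_subset_Iio hsub
  rw [h1] at h2
  exact absurd (Cardinal.lift_le.mp h2) (not_le.mpr (Cardinal.lt_ord.mp hb))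

theorem UltrafilterOn.compl_Iio_mem {ν : Cardinal.{u}} {U : UltrafilterOn ν}
    (hU : U.IsUniform) {b : Ordinal.{u}} (hb : b < ν.ord) :
    Set.Iio ν.ord \ Set.Iio b ∈ U.sets := by
  rcases U.mem_or_compl_mem (Set.Iio b) (fun x hx => lt_trans hx hb) with h | h
  · exact absurd (hU _ h) (by
      have h2 := mk_le_of_subset_Iio (le_refl (Set.Iio b))
      intro heq
      rw [heq] at h2
      exact absurd (Cardinal.lift_le.mp h2) (not_le.mpr (Cardinal.lt_ord.mp hb)))
  · exact h

theorem UltrafilterOn.no_single_generator {ν : Cardinal.{u}} (hν : ℵ₀ ≤ ν)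
    {U : UltrafilterOn ν} (hU : U.IsUniform) {W : Set Ordinal.{u}} (hW : W ∈ U.sets)
    (hall : ∀ X ∈ U.sets, AlmostSub ν W X) : False := by
  have hWκ : #W = Cardinal.lift.{u+1,u} ν := hU W hW
  have hinf : ℵ₀ ≤ #W := by
    rw [hWκ]; rwa [Cardinal.aleph0_le_lift]
  have hsum : #(↥W ⊕ ↥W) = #W := by
    rw [Cardinal.mk_sum, Cardinal.lift_id, Cardinal.add_eq_self hinf]
  obtain ⟨e⟩ := Cardinal.eq.mp hsum
  set W₁ : Set Ordinal.{u} := Subtype.val '' (Set.range (e ∘ Sum.inl)) with hW₁def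
  set W₂ : Set Ordinal.{u} := Subtype.val '' (Set.range (e ∘ Sum.inr)) with hW₂def
  have hW₁W : W₁ ⊆ W := by
    rintro x ⟨y, _, rfl⟩; exact y.2
  have hW₂W : W₂ ⊆ W := by
    rintro x ⟨y, _, rfl⟩; exact y.2
  have hdisj : W₂ ⊆ W \ W₁ := by
    rintro x ⟨y, ⟨a, ha⟩, rfl⟩
    refine ⟨y.2, ?_⟩
    rintro ⟨z, ⟨b, hb⟩, hzy⟩
    have : z = y := Subtype.val_injective hzy
    subst this
    rw [← ha] at hb
    exact Sum.inl_ne_inr (e.injective hb)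
  have hmk1 : #W₁ = Cardinal.lift.{u+1,u} ν := by
    rw [hW₁def, Cardinal.mk_image_eq Subtype.val_injective,
      Cardinal.mk_range_eq _ (e.injective.comp Sum.inl_injective), ← hWκ]
  have hmk2 : #W₂ = Cardinal.lift.{u+1,u} ν := by
    rw [hW₂def, Cardinal.mk_image_eq Subtype.val_injective,
      Cardinal.mk_range_eq _ (e.injective.comp Sum.inr_injective), ← hWκ]
  have hbig : ∀ {S : Set Ordinal.{u}}, #S = Cardinal.lift.{u+1,u} ν →
      ∀ {b : Ordinal.{u}}, b < ν.ord → ¬ (S ⊆ Set.Iio b) := by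
    intro S hS b hb hsub
    have h2 := mk_le_of_subset_Iio hsub
    rw [hS] at h2
    exact absurd (Cardinal.lift_le.mp h2) (not_le.mpr (Cardinal.lt_ord.mp hb))
  have hW₁sub : W₁ ⊆ Set.Iio ν.ord := fun x hx => U.sets_subset W hW (hW₁W hx)
  rcases U.mem_or_compl_mem W₁ hW₁sub with h | h
  · obtain ⟨b, hb, hs⟩ := hall W₁ h
    exact hbig hmk2 hb (fun x hx => hs (hdisj hx))
  · obtain ⟨b, hb, hs⟩ := hall _ h
    refine hbig hmk1 hb (fun x hx => hs ⟨hW₁W hx, ?_⟩)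
    intro hmem
    exact hmem.2 hx

theorem UltrafilterOn.exists_bad_index {ν : Cardinal.{u}} (hν : ℵ₀ ≤ ν)
    {U : UltrafilterOn ν} (hU : U.IsUniform) {θord : Ordinal.{u}}
    {A : Ordinal.{u} → Set Ordinal.{u}} (hA : U.IsADGenSeq θord A)
    {Z : Set Ordinal.{u}} (hZ : Z ∈ U.sets) :
    ∃ j, j < θord ∧ ¬ AlmostSub ν Z (A j) := by
  by_contra hcon
  push_neg at hcon
  obtain ⟨Y, hYmem, hYZ⟩ := hA.2.2.2 Z hZ
  obtain ⟨j₀, hj₀, rfl⟩ := hYmem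
  refine UltrafilterOn.no_single_generator hν hU (hA.1 j₀ hj₀) (fun X hX => ?_)
  obtain ⟨Y', hY'mem, hY'X⟩ := hA.2.2.2 X hX
  obtain ⟨j, hj, rfl⟩ := hY'mem
  exact almostSub_trans (almostSub_trans hYZ (hcon j hj)) hY'X

/-- Lemma `scalegeneration`.
If `κ` is singular with `cf κ = ρ`, `2^ρ ≤ κ`, `⟨μ i : i < ρ⟩` is increasing and cofinal
in `κ` with each `μ i` carrying a `μ i`-complete uniform ultrafilter with an
almost-decreasing generating sequence of regular length `θ i`, and there are scales
`⟨f α : α < σ⟩` in `∏ μ i` and `⟨g β : β < τ⟩` in `∏ θ i` with `σ, τ` regular,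
`κ < σ ≤ τ`, then there is a uniform ultrafilter on `κ` of character `τ`. -/
theorem statement0 (κ ρ σ τ : Cardinal.{u})
    (hκinf : ℵ₀ ≤ κ) (hκsing : κ.ord.cof < κ) (hκcof : κ.ord.cof = ρ)
    (h2ρ : 2 ^ ρ ≤ κ)
    (μ θ : Ordinal.{u} → Cardinal.{u})
    (hμmono : ∀ i j, i < j → j < ρ.ord → μ i < μ j)
    (hμlt : ∀ i, i < ρ.ord → μ i < κ)
    (hμcofinal : ∀ c, c < κ → ∃ i, i < ρ.ord ∧ c ≤ μ i)
    (hθreg : ∀ i, i < ρ.ord → (θ i).IsRegular)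
    (hUi : ∀ i, i < ρ.ord → ∃ Ui : UltrafilterOn (μ i),
      Ui.IsUniform ∧ Ui.IsComplete ∧ ∃ A, Ui.IsADGenSeq (θ i).ord A)
    (f g : Ordinal.{u} → Ordinal.{u} → Ordinal.{u})
    (hσreg : σ.IsRegular) (hκσ : κ < σ)
    (hf : IsScale ρ.ord μ σ f)
    (hτreg : τ.IsRegular) (hστ : σ ≤ τ)
    (hg : IsScale ρ.ord θ τ g) :
    ∃ U : UltrafilterOn κ, U.IsUniform ∧ U.char = Cardinal.lift.{u + 1, u} τ := by
  classical
  have hκord : Order.IsSuccLimit κ.ord := Cardinal.isSuccLimit_ord hκinf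
  have hρℵ : ℵ₀ ≤ ρ := by
    rw [← hκcof]; exact Ordinal.aleph0_le_cof.mpr hκord
  have hρord : Order.IsSuccLimit ρ.ord := Cardinal.isSuccLimit_ord hρℵ
  have hρpos : (0 : Ordinal) < ρ.ord := hρord.pos
  have hκpos : (0 : Ordinal) < κ.ord := hκord.pos
  have hsucc : ∀ i, i < ρ.ord → i + 1 < ρ.ord := fun i hi => by
    rw [Ordinal.add_one_eq_succ]; exact hρord.succ_lt hi
  have hρκ : ρ < κ := by rw [← hκcof]; exact hκsing
  have hℵκ : ℵ₀ < κ := lt_of_le_of_lt hρℵ hρκ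
  have hμle : ∀ i j, i ≤ j → j < ρ.ord → μ i ≤ μ j := by
    intro i j hij hj
    rcases eq_or_lt_of_le hij with rfl | h
    · exact le_refl _
    · exact (hμmono i j h hj).le
  -- chosen ultrafilters and generating sequences
  set Us : ∀ i, i < ρ.ord → UltrafilterOn (μ i) := fun i h => (hUi i h).choose with hUsdef
  have hUsUnif : ∀ i (h : i < ρ.ord), (Us i h).IsUniform := fun i h => (hUi i h).choose_spec.1
  set As : Ordinal.{u} → Ordinal.{u} → Set Ordinal.{u} := fun i j =>
    if h : i < ρ.ord then ((hUi i h).choose_spec.2.2).choose j else ∅ with hAsdef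
  have hAs : ∀ i (h : i < ρ.ord), (Us i h).IsADGenSeq (θ i).ord (As i) := by
    intro i h
    have h2 := ((hUi i h).choose_spec.2.2).choose_spec
    have : As i = ((hUi i h).choose_spec.2.2).choose := by
      funext j; simp only [hAsdef, dif_pos h]
    rw [this]
    exact h2
  have hμpos : ∀ i, i < ρ.ord → (0 : Ordinal) < (μ i).ord := by
    intro i h
    rcases eq_zero_or_pos (μ i).ord with h0 | h0
    · exfalso
      have hu := (Us i h).univ_mem
      rw [h0] at hu
      have : Set.Iio (0 : Ordinal) = ∅ := by
        ext x; simp [not_lt_zero]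
      rw [this] at hu
      exact (Us i h).empty_not_mem hu
    · exact h0
  have hθpos : ∀ i, i < ρ.ord → (0 : Ordinal) < (θ i).ord := by
    intro i h
    rw [Cardinal.lt_ord, Ordinal.card_zero]
    exact lt_of_lt_of_le Cardinal.aleph0_pos (hθreg i h).1
  have hμordlt : ∀ i j, i < j → j < ρ.ord → (μ i).ord < (μ j).ord :=
    fun i j hij hj => Cardinal.ord_lt_ord.mpr (hμmono i j hij hj)
  have hμκord : ∀ i, i < ρ.ord → (μ i).ord < κ.ord :=
    fun i h => Cardinal.ord_lt_ord.mpr (hμlt i h)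
  -- the ultrafilter D on ρ, concentrating on successor ordinals and tails
  haveI : Nonempty (Set.Iio ρ.ord) := ⟨⟨0, hρpos⟩⟩
  set Fmap : Filter Ordinal.{u} :=
    Filter.map (fun i : Set.Iio ρ.ord => i.1 + 1) Filter.atTop with hFdef
  haveI : Fmap.NeBot := Filter.map_neBot
  set D : Ultrafilter Ordinal.{u} := Ultrafilter.of Fmap with hDdef
  have hDF : ∀ S : Set Ordinal.{u}, S ∈ Fmap → S ∈ D := fun S hS => Ultrafilter.of_le Fmap hS
  have hDG : ∀ β, β < ρ.ord → {x | ∃ i, i < ρ.ord ∧ β ≤ i ∧ x = i + 1} ∈ D := by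
    intro β hβ
    apply hDF
    rw [hFdef, Filter.mem_map]
    apply Filter.mem_of_superset (Filter.mem_atTop (⟨β, hβ⟩ : Set.Iio ρ.ord))
    rintro ⟨i, hi⟩ hge
    exact ⟨i, hi, hge, rfl⟩
  have hDne : ∀ S ∈ D, ∀ β, β < ρ.ord → ∃ i, i < ρ.ord ∧ β ≤ i ∧ i + 1 ∈ S := by
    intro S hS β hβ
    have hinter : S ∩ {x | ∃ i, i < ρ.ord ∧ β ≤ i ∧ x = i + 1} ∈ D :=
      Filter.inter_mem hS (hDG β hβ)
    obtain ⟨x, hxS, i, hi, hβi, rfl⟩ := Filter.nonempty_of_mem hinter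
    exact ⟨i, hi, hβi, hxS⟩
  have hDIio : Set.Iio ρ.ord ∈ D := by
    apply Filter.mem_of_superset (hDG 0 hρpos)
    rintro x ⟨i, hi, _, rfl⟩
    exact hsucc i hi
  have hDIco : ∀ β, β < ρ.ord → {x | β ≤ x ∧ x < ρ.ord} ∈ D := by
    intro β hβ
    apply Filter.mem_of_superset (hDG β hβ)
    rintro x ⟨i, hi, hle, rfl⟩
    exact ⟨le_trans hle (le_of_lt (lt_add_one i)), hsucc i hi⟩
  -- traces
  set SX : Set Ordinal.{u} → Set Ordinal.{u} := fun X =>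
    {i | ∃ h : i < ρ.ord, X ∩ Set.Iio (μ i).ord ∈ (Us i h).sets} with hSXdef
  have hSXsub : ∀ X, SX X ⊆ Set.Iio ρ.ord := by
    rintro X i ⟨h, _⟩; exact h
  have hκinter : ∀ i, i < ρ.ord → Set.Iio κ.ord ∩ Set.Iio (μ i).ord = Set.Iio (μ i).ord := by
    intro i h
    apply Set.inter_eq_self_of_subset_right
    intro x hx
    exact lt_trans hx (hμκord i h)
  set U : UltrafilterOn κ :=
    { sets := {X | X ⊆ Set.Iio κ.ord ∧ SX X ∈ D}
      sets_subset := fun A hA => hA.1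
      univ_mem := by
        refine ⟨subset_rfl, Filter.mem_of_superset hDIio ?_⟩
        intro i hi
        refine ⟨hi, ?_⟩
        rw [hκinter i hi]
        exact (Us i hi).univ_mem
      superset_mem := by
        rintro A ⟨hA1, hA2⟩ B hB1 hAB
        refine ⟨hB1, Filter.mem_of_superset hA2 ?_⟩
        rintro i ⟨hi, hmem⟩
        refine ⟨hi, (Us i hi).superset_mem _ hmem _ Set.inter_subset_right ?_⟩
        exact Set.inter_subset_inter_left _ hAB
      inter_mem := by
        rintro A ⟨hA1, hA2⟩ B ⟨hB1, hB2⟩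
        refine ⟨fun x hx => hA1 hx.1, Filter.mem_of_superset (Filter.inter_mem hA2 hB2) ?_⟩
        rintro i ⟨⟨hi, hmemA⟩, ⟨hi', hmemB⟩⟩
        refine ⟨hi, ?_⟩
        have : (A ∩ B) ∩ Set.Iio (μ i).ord =
            (A ∩ Set.Iio (μ i).ord) ∩ (B ∩ Set.Iio (μ i).ord) := by
          ext x; constructor
          · rintro ⟨⟨h1, h2⟩, h3⟩; exact ⟨⟨h1, h3⟩, ⟨h2, h3⟩⟩
          · rintro ⟨⟨h1, h3⟩, ⟨h2, _⟩⟩; exact ⟨⟨h1, h2⟩, h3⟩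
        rw [this]
        exact (Us i hi).inter_mem _ hmemA _ hmemB
      empty_not_mem := by
        rintro ⟨_, h2⟩
        have : SX (∅ : Set Ordinal.{u}) = ∅ := by
          ext i
          simp only [hSXdef, Set.mem_setOf_eq, Set.empty_inter, Set.mem_empty_iff_false,
            iff_false, not_exists]
          intro h
          exact (Us i h).empty_not_mem
        rw [this] at h2
        exact Filter.empty_notMem (D : Filter Ordinal.{u}) h2
      mem_or_compl_mem := by
        intro A hA
        by_cases hD : SX A ∈ D
        · exact Or.inl ⟨hA, hD⟩
        · right
          refine ⟨Set.diff_subset, ?_⟩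
          have hcompl : (SX A)ᶜ ∈ D := (Ultrafilter.compl_mem_iff_notMem).mpr hD
          apply Filter.mem_of_superset (Filter.inter_mem hcompl hDIio)
          rintro i ⟨hnot, hi⟩
          refine ⟨hi, ?_⟩
          rcases (Us i hi).mem_or_compl_mem (A ∩ Set.Iio (μ i).ord)
            Set.inter_subset_right with h | h
          · exact absurd (⟨hi, h⟩ : i ∈ SX A) hnot
          · have heq : (Set.Iio κ.ord \ A) ∩ Set.Iio (μ i).ord =
                Set.Iio (μ i).ord \ (A ∩ Set.Iio (μ i).ord) := by
              ext x
              constructor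
              · rintro ⟨⟨_, hxA⟩, hxμ⟩
                exact ⟨hxμ, fun hmem => hxA hmem.1⟩
              · rintro ⟨hxμ, hxA⟩
                exact ⟨⟨lt_trans hxμ (hμκord i hi), fun hA' => hxA ⟨hA', hxμ⟩⟩, hxμ⟩
            rw [heq]
            exact h } with hUdef
  have hUsets : ∀ X, X ∈ U.sets ↔ (X ⊆ Set.Iio κ.ord ∧ SX X ∈ D) := fun X => Iff.rfl
  -- uniformity of U
  have hUunif : U.IsUniform := by
    rintro X ⟨hX1, hX2⟩
    have hle : #X ≤ Cardinal.lift.{u+1, u} κ := by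
      have := mk_le_of_subset_Iio (b := κ.ord) hX1
      rwa [Cardinal.card_ord] at this
    rcases lt_or_eq_of_le hle with hlt | heq
    · exfalso
      obtain ⟨c, hcκ, hc⟩ := Cardinal.lt_lift_iff.mp hlt
      obtain ⟨i₁, hi₁, hci₁⟩ := hμcofinal c hcκ
      obtain ⟨i, hi, hi₁i, hiS⟩ := hDne _ hX2 i₁ hi₁
      obtain ⟨hisucc, hmem⟩ := hiS
      have hμb : c < μ (i + 1) := lt_of_le_of_lt hci₁
        (hμmono i₁ (i + 1) (lt_of_le_of_lt hi₁i (lt_add_one i)) hisucc)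
      have h1 : #(X ∩ Set.Iio (μ (i+1)).ord : Set Ordinal.{u}) =
          Cardinal.lift.{u+1, u} (μ (i+1)) := hUsUnif (i+1) hisucc _ hmem
      have h2 : #(X ∩ Set.Iio (μ (i+1)).ord : Set Ordinal.{u}) ≤ #X :=
        Cardinal.mk_le_mk_of_subset Set.inter_subset_left
      rw [h1, ← hc] at h2
      exact absurd (Cardinal.lift_le.mp h2) (not_le.mpr hμb)
    · exact heq
  -- the canonical base sets
  set Cset : Ordinal.{u} × Ordinal.{u} × Set Ordinal.{u} × Ordinal.{u} → Set Ordinal.{u} :=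
    fun q => {x | ∃ i, ∃ _ : i < ρ.ord, i ∈ q.2.2.1 ∧ q.2.2.2 ≤ i ∧
      x ∈ As i (g q.1 i) ∧ f q.2.1 i ≤ x} with hCdef
  set P : Set (Ordinal.{u} × Ordinal.{u} × Set Ordinal.{u} × Ordinal.{u}) :=
    {q | q.1 < τ.ord ∧ q.2.1 < σ.ord ∧ q.2.2.1 ∈ D ∧ q.2.2.1 ⊆ Set.Iio ρ.ord ∧
      q.2.2.2 < ρ.ord} with hPdef
  have hAmem : ∀ i (h : i < ρ.ord) j, j < (θ i).ord → As i j ∈ (Us i h).sets :=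
    fun i h j hj => (hAs i h).1 j hj
  have hAsub : ∀ i (h : i < ρ.ord) j, j < (θ i).ord → As i j ⊆ Set.Iio (μ i).ord :=
    fun i h j hj => (Us i h).sets_subset _ (hAmem i h j hj)
  have hCsub : ∀ q ∈ P, Cset q ⊆ Set.Iio κ.ord := by
    rintro q hq x ⟨i, h, _, _, hxA, _⟩
    exact lt_trans (hAsub i h _ (hg.1 q.1 hq.1 i h) hxA) (hμκord i h)
  have hCmemU : ∀ q ∈ P, Cset q ∈ U.sets := by
    intro q hq
    refine ⟨hCsub q hq, ?_⟩
    have hT : q.2.2.1 ∩ {x | q.2.2.2 ≤ x ∧ x < ρ.ord} ∈ D :=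
      Filter.inter_mem hq.2.2.1 (hDIco _ hq.2.2.2.2)
    apply Filter.mem_of_superset hT
    rintro i ⟨hiS, hile, h⟩
    refine ⟨h, ?_⟩
    have hgθ : g q.1 i < (θ i).ord := hg.1 q.1 hq.1 i h
    have hA : As i (g q.1 i) ∈ (Us i h).sets := hAmem i h _ hgθ
    have hcut : Set.Iio (μ i).ord \ Set.Iio (f q.2.1 i) ∈ (Us i h).sets :=
      UltrafilterOn.compl_Iio_mem (hUsUnif i h) (hf.1 q.2.1 hq.2.1 i h)
    refine (Us i h).superset_mem _ ((Us i h).inter_mem _ hA _ hcut) _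
      Set.inter_subset_right ?_
    rintro x ⟨hxA, hxμ, hxf⟩
    exact ⟨⟨i, h, hiS, hile, hxA, not_lt.mp hxf⟩, hxμ⟩
  have hCov : ∀ X ∈ U.sets, ∃ q ∈ P, AlmostSub κ (Cset q) X := by
    rintro X ⟨hX1, hX2⟩
    have hjex : ∀ i : Ordinal.{u}, ∃ j, ∀ h : i < ρ.ord, j < (θ i).ord ∧
        (i ∈ SX X → AlmostSub (μ i) (As i j) (X ∩ Set.Iio (μ i).ord)) := by
      intro i
      by_cases h : i < ρ.ord
      · by_cases hS : i ∈ SX X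
        · obtain ⟨h', hS2⟩ := hS
          obtain ⟨Y, hYmem, hYa⟩ := (hAs i h).2.2.2 _ hS2
          obtain ⟨j, hj, rfl⟩ := hYmem
          exact ⟨j, fun _ => ⟨hj, fun _ => hYa⟩⟩
        · exact ⟨0, fun h' => ⟨hθpos i h', fun hS' => absurd hS' hS⟩⟩
      · exact ⟨0, fun h' => absurd h' h⟩
    choose jf hjf using hjex
    obtain ⟨β, hβ, i₀, hi₀, hdomg⟩ := hg.2.2 jf (fun i h => (hjf i h).1)
    have hmex : ∀ i : Ordinal.{u}, ∃ m, ∀ h : i < ρ.ord, m < (μ i).ord ∧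
        (i ∈ SX X → i₀ ≤ i → As i (g β i) \ X ⊆ Set.Iio m) := by
      intro i
      by_cases h : i < ρ.ord
      · by_cases hc : i ∈ SX X ∧ i₀ ≤ i
        · obtain ⟨hS, hi₀i⟩ := hc
          have hgθ : g β i < (θ i).ord := hg.1 β hβ i h
          obtain ⟨b1, hb1, hs1⟩ := (hAs i h).2.1 (jf i) (g β i)
            (le_of_lt (hdomg i hi₀i h)) hgθ
          obtain ⟨b2, hb2, hs2⟩ := (hjf i h).2 hS
          refine ⟨max b1 b2, fun _ => ⟨max_lt hb1 hb2, fun _ _ => ?_⟩⟩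
          rintro x ⟨hxA, hxX⟩
          simp only [Set.mem_Iio]
          by_cases hxj : x ∈ As i (jf i)
          · exact lt_of_lt_of_le (hs2 ⟨hxj, fun hmem => hxX hmem.1⟩) (le_max_right _ _)
          · exact lt_of_lt_of_le (hs1 ⟨hxA, hxj⟩) (le_max_left _ _)
        · exact ⟨0, fun h' => ⟨hμpos i h', fun hS hle => absurd ⟨hS, hle⟩ hc⟩⟩
      · exact ⟨0, fun h' => absurd h' h⟩
    choose mf hmf using hmex
    obtain ⟨α, hα, i₁, hi₁, hdomf⟩ := hf.2.2 mf (fun i h => (hmf i h).1)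
    refine ⟨(β, α, SX X, max i₀ i₁), ⟨hβ, hα, hX2, hSXsub X, max_lt hi₀ hi₁⟩,
      0, hκpos, ?_⟩
    rintro x ⟨hxC, hxX⟩
    obtain ⟨i, h, hiS, hile, hxA, hfx⟩ := hxC
    exfalso
    have hxm : x < mf i := (hmf i h).2 hiS (le_trans (le_max_left _ _) hile) ⟨hxA, hxX⟩
    exact absurd hfx (not_le.mpr (lt_trans hxm (hdomf i (le_trans (le_max_right _ _) hile) h)))
  set B₀ : Set (Set Ordinal.{u}) := Cset '' P with hB₀def
  have hB₀base : U.IsBase B₀ := by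
    constructor
    · rintro Y ⟨q, hq, rfl⟩
      exact hCmemU q hq
    · intro X hX
      obtain ⟨q, hq, ha⟩ := hCov X hX
      exact ⟨Cset q, ⟨q, hq, rfl⟩, ha⟩
  have hτℵ : ℵ₀ ≤ Cardinal.lift.{u+1, u} τ := by
    rw [Cardinal.aleph0_le_lift]; exact hτreg.1
  have hmul : ∀ a b : Cardinal.{u+1}, a ≤ Cardinal.lift.{u+1, u} τ →
      b ≤ Cardinal.lift.{u+1, u} τ → a * b ≤ Cardinal.lift.{u+1, u} τ :=
    fun a b ha hb => (Cardinal.mul_le_max a b).trans (max_le (max_le ha hb) hτℵ)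
  have eprod : ∀ (s : Set (Ordinal.{u} × Ordinal.{u} × Set Ordinal.{u} × Ordinal.{u})), True := fun _ => trivial
  have hB₀card : #B₀ ≤ Cardinal.lift.{u+1, u} τ := by
    have h1 : #B₀ ≤ #P := Cardinal.mk_image_le
    have h2 : P ⊆ (Set.Iio τ.ord) ×ˢ ((Set.Iio σ.ord) ×ˢ
        ((𝒫 (Set.Iio ρ.ord)) ×ˢ (Set.Iio ρ.ord))) := by
      rintro q ⟨ha, hb, _, hd, he⟩
      exact ⟨ha, hb, hd, he⟩
    have e1 : ∀ {γ δ : Type (u+1)} (s : Set γ) (t : Set δ),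
        #(s ×ˢ t : Set (γ × δ)) = #s * #t := by
      intro γ δ s t
      rw [Cardinal.mk_congr (Equiv.Set.prod s t), Cardinal.mk_prod,
        Cardinal.lift_id, Cardinal.lift_id]
    have eIio : ∀ c : Cardinal.{u}, #(Set.Iio c.ord) = Cardinal.lift.{u+1, u} c := by
      intro c
      rw [Ordinal.mk_Iio_ordinal, Cardinal.card_ord]
    have epow : #(𝒫 (Set.Iio ρ.ord) : Set (Set Ordinal.{u})) =
        2 ^ Cardinal.lift.{u+1, u} ρ := by
      rw [Cardinal.mk_congr (Equiv.Set.powerset _), Cardinal.mk_set, eIio]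
    have hpowτ : (2 : Cardinal.{u+1}) ^ Cardinal.lift.{u+1, u} ρ ≤ Cardinal.lift.{u+1, u} τ := by
      have : (2 : Cardinal.{u+1}) ^ Cardinal.lift.{u+1, u} ρ = Cardinal.lift.{u+1, u} (2 ^ ρ) := by
        rw [Cardinal.lift_power]
        norm_num
      rw [this]
      exact Cardinal.lift_le.mpr (h2ρ.trans ((hκσ.le).trans hστ))
    calc #B₀ ≤ #P := h1
      _ ≤ #((Set.Iio τ.ord) ×ˢ ((Set.Iio σ.ord) ×ˢ
          ((𝒫 (Set.Iio ρ.ord)) ×ˢ (Set.Iio ρ.ord))) : Set _) := Cardinal.mk_le_mk_of_subset h2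
      _ = Cardinal.lift.{u+1, u} τ * (Cardinal.lift.{u+1, u} σ *
          ((2 ^ Cardinal.lift.{u+1, u} ρ) * Cardinal.lift.{u+1, u} ρ)) := by
        rw [e1, e1, e1, eIio, eIio, eIio, epow]
      _ ≤ Cardinal.lift.{u+1, u} τ := by
        apply hmul _ _ le_rfl
        apply hmul
        · exact Cardinal.lift_le.mpr hστ
        · apply hmul _ _ hpowτ
          exact Cardinal.lift_le.mpr ((hρκ.le).trans ((hκσ.le).trans hστ))
  have hchar_le : U.char ≤ Cardinal.lift.{u+1, u} τ :=
    le_trans (csInf_le' ⟨B₀, hB₀base, rfl⟩) hB₀card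
  -- lower bound: every base has cardinality at least τ
  have hchar_ge : Cardinal.lift.{u+1, u} τ ≤ U.char := by
    have hne₀ : {c | ∃ B, U.IsBase B ∧ #B = c}.Nonempty := ⟨#↑B₀, B₀, hB₀base, rfl⟩
    show Cardinal.lift.{u+1, u} τ ≤ sInf {c | ∃ B, U.IsBase B ∧ #B = c}
    apply le_csInf hne₀
    rintro c ⟨Bb, hBbase, rfl⟩
    by_contra hlt
    push_neg at hlt
    obtain ⟨idag, hidag, hidagℵ⟩ := hμcofinal ℵ₀ hℵκ
    set hfun : Set Ordinal.{u} → Ordinal.{u} → Ordinal.{u} := fun Y i =>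
      if _ : {j | j < (θ i).ord ∧
          ¬ AlmostSub (μ i) (Y ∩ Set.Iio (μ i).ord) (As i j)}.Nonempty then
        sInf {j | j < (θ i).ord ∧ ¬ AlmostSub (μ i) (Y ∩ Set.Iio (μ i).ord) (As i j)}
      else 0
      with hhdef
    have hfun_lt : ∀ Y i, i < ρ.ord → hfun Y i < (θ i).ord := by
      intro Y i h
      by_cases hne : {j | j < (θ i).ord ∧
          ¬ AlmostSub (μ i) (Y ∩ Set.Iio (μ i).ord) (As i j)}.Nonempty
      · have : hfun Y i = sInf {j | j < (θ i).ord ∧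
            ¬ AlmostSub (μ i) (Y ∩ Set.Iio (μ i).ord) (As i j)} := by
          rw [hhdef]; simp only [dif_pos hne]
        rw [this]
        exact (csInf_mem hne).1
      · have : hfun Y i = 0 := by
          rw [hhdef]; simp only [dif_neg hne]
        rw [this]
        exact hθpos i h
    have hfun_bad : ∀ Y i (h : i < ρ.ord), ℵ₀ ≤ μ i →
        (Y ∩ Set.Iio (μ i).ord) ∈ (Us i h).sets →
        ¬ AlmostSub (μ i) (Y ∩ Set.Iio (μ i).ord) (As i (hfun Y i)) := by
      intro Y i h hℵ hmem
      have hne : {j | j < (θ i).ord ∧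
          ¬ AlmostSub (μ i) (Y ∩ Set.Iio (μ i).ord) (As i j)}.Nonempty := by
        obtain ⟨j, hj1, hj2⟩ :=
          UltrafilterOn.exists_bad_index hℵ (hUsUnif i h) (hAs i h) hmem
        exact ⟨j, hj1, hj2⟩
      have : hfun Y i = sInf {j | j < (θ i).ord ∧
          ¬ AlmostSub (μ i) (Y ∩ Set.Iio (μ i).ord) (As i j)} := by
        rw [hhdef]; simp only [dif_pos hne]
      rw [this]
      exact (csInf_mem hne).2
    have hbex : ∀ Y : ↥Bb, ∃ b, b < τ.ord ∧ EvDomLt ρ.ord (hfun Y.1) (g b) :=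
      fun Y => hg.2.2 (hfun Y.1) (fun i h => hfun_lt Y.1 i h)
    choose bY hbY1 hbY2 using hbex
    set T : Set Ordinal.{u} := Set.range (fun Y : ↥Bb => bY Y + 1) with hTdef
    have hTsub : T ⊆ Set.Iio τ.ord := by
      rintro x ⟨Y, rfl⟩
      show bY Y + 1 ∈ Set.Iio τ.ord
      rw [Set.mem_Iio, Ordinal.add_one_eq_succ]
      exact (Cardinal.isSuccLimit_ord hτreg.1).succ_lt (hbY1 Y)
    haveI hTsmall : Small.{u} ↥T := small_subset hTsub
    set β' : Ordinal.{u} :=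
      iSup (fun x : Shrink.{u} ↥T => ((equivShrink ↥T).symm x).1) with hβ'def
    have hβ'lt : β' < τ.ord := by
      apply Ordinal.iSup_lt_ord_lift
      · rw [Cardinal.lift_id, Cardinal.IsRegular.cof_eq hτreg]
        have hTcard : #↥T < Cardinal.lift.{u+1, u} τ :=
          lt_of_le_of_lt (Cardinal.mk_range_le) hlt
        have h1 := Cardinal.lift_mk_shrink'.{u+1, u} ↥T
        rw [Cardinal.lift_id'.{u, u+1}] at h1
        rw [← Cardinal.lift_lt.{u, u+1}, h1]
        exact hTcard
      · intro x
        exact hTsub ((equivShrink ↥T).symm x).2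
    have hβ'mem : ∀ Y : ↥Bb, bY Y < β' := by
      intro Y
      have hmem : bY Y + 1 ∈ T := ⟨Y, rfl⟩
      have hle : bY Y + 1 ≤ β' := by
        have h2 := le_ciSup (f := fun x : Shrink.{u} ↥T => ((equivShrink ↥T).symm x).1)
          (Ordinal.bddAbove_range _) (equivShrink ↥T ⟨bY Y + 1, hmem⟩)
        simp only [Equiv.symm_apply_apply] at h2
        exact h2
      exact lt_of_lt_of_le (lt_add_one _) hle
    have hdomβ' : ∀ Y : ↥Bb, EvDomLt ρ.ord (hfun Y.1) (g β') := by
      intro Y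
      obtain ⟨i₀, hi₀, hd⟩ := hbY2 Y
      obtain ⟨i₁, hi₁, hd'⟩ := hg.2.1 (bY Y) β' (hβ'mem Y) hβ'lt
      exact ⟨max i₀ i₁, max_lt hi₀ hi₁, fun i hle hi =>
        lt_trans (hd i (le_trans (le_max_left _ _) hle) hi)
          (hd' i (le_trans (le_max_right _ _) hle) hi)⟩
    set Xs : Set Ordinal.{u} := {x | ∃ i, ∃ _ : i < ρ.ord,
      x ∈ As (i+1) (g β' (i+1)) ∧ (μ i).ord ≤ x} with hXsdef
    have hXssub : Xs ⊆ Set.Iio κ.ord := by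
      rintro x ⟨i, h, hxA, _⟩
      exact lt_trans (hAsub (i+1) (hsucc i h) _ (hg.1 β' hβ'lt (i+1) (hsucc i h)) hxA)
        (hμκord (i+1) (hsucc i h))
    have hXsmem : Xs ∈ U.sets := by
      refine ⟨hXssub, ?_⟩
      apply Filter.mem_of_superset (hDG 0 hρpos)
      rintro x ⟨i, hi, _, rfl⟩
      have h1 : i + 1 < ρ.ord := hsucc i hi
      refine ⟨h1, ?_⟩
      have hgθ : g β' (i+1) < (θ (i+1)).ord := hg.1 β' hβ'lt (i+1) h1
      have hA : As (i+1) (g β' (i+1)) ∈ (Us (i+1) h1).sets := hAmem _ h1 _ hgθ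
      have hcut : Set.Iio (μ (i+1)).ord \ Set.Iio (μ i).ord ∈ (Us (i+1) h1).sets :=
        UltrafilterOn.compl_Iio_mem (hUsUnif _ h1) (hμordlt i (i+1) (lt_add_one i) h1)
      refine (Us (i+1) h1).superset_mem _ ((Us (i+1) h1).inter_mem _ hA _ hcut) _
        Set.inter_subset_right ?_
      rintro y ⟨hyA, hyμ, hyν⟩
      exact ⟨⟨i, hi, hyA, not_lt.mp hyν⟩, hyμ⟩
    obtain ⟨Y, hYB, γ, hγ, hYsub⟩ := hBbase.2 Xs hXsmem
    have hYmem : Y ∈ U.sets := hBbase.1 hYB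
    obtain ⟨iγ, hiγ, hγle⟩ := hμcofinal γ.card (Cardinal.lt_ord.mp hγ)
    obtain ⟨i₀Y, hi₀Y, hdY⟩ := hdomβ' ⟨Y, hYB⟩
    have hβbig : max (max idag iγ) i₀Y < ρ.ord := max_lt (max_lt hidag hiγ) hi₀Y
    obtain ⟨i, hi, hble, hiS⟩ := hDne _ hYmem.2 (max (max idag iγ) i₀Y) hβbig
    have hi' : i + 1 < ρ.ord := hsucc i hi
    obtain ⟨hi'2, htrace⟩ := hiS
    have hii' : i < i + 1 := lt_add_one i
    have hμi'ℵ : ℵ₀ ≤ μ (i+1) := le_trans hidagℵ (hμle idag (i+1)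
      (le_trans (le_trans (le_max_left _ _) (le_max_left _ _)) (le_trans hble hii'.le)) hi')
    have hγμ : γ < (μ (i+1)).ord := by
      rw [Cardinal.lt_ord]
      exact lt_of_le_of_lt hγle (hμmono iγ (i+1)
        (lt_of_le_of_lt (le_trans (le_trans (le_max_right idag iγ) (le_max_left _ i₀Y)) hble)
          hii') hi')
    have hkey : AlmostSub (μ (i+1)) (Y ∩ Set.Iio (μ (i+1)).ord) (As (i+1) (g β' (i+1))) := by
      refine ⟨max γ (μ i).ord, max_lt hγμ (hμordlt i (i+1) hii' hi'), ?_⟩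
      rintro y ⟨⟨hyY, hyμ⟩, hyA⟩
      simp only [Set.mem_Iio]
      by_cases hyX : y ∈ Xs
      · obtain ⟨i'', h'', hy'', hge''⟩ := hyX
        rcases lt_trichotomy (i''+1) (i+1) with hlt'' | heq'' | hgt''
        · have h1 : y < (μ (i''+1)).ord :=
            hAsub (i''+1) (hsucc i'' h'') _ (hg.1 β' hβ'lt _ (hsucc i'' h'')) hy''
          have hle'' : i'' + 1 ≤ i := by
            rwa [Ordinal.add_one_eq_succ (i''), Ordinal.add_one_eq_succ i,
              Order.lt_succ_iff] at hlt''
          have h2 : (μ (i''+1)).ord ≤ (μ i).ord :=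
            Cardinal.ord_le_ord.mpr (hμle (i''+1) i hle'' hi)
          exact lt_of_lt_of_le (lt_of_lt_of_le h1 h2) (le_max_right _ _)
        · exact absurd hy'' (by rw [heq'']; exact hyA)
        · exfalso
          have hle'' : i + 1 ≤ i'' := by
            rwa [Ordinal.add_one_eq_succ i'', Order.lt_succ_iff] at hgt''
          have h2 : (μ (i+1)).ord ≤ (μ i'').ord :=
            Cardinal.ord_le_ord.mpr (hμle (i+1) i'' hle'' h'')
          exact absurd hyμ (not_lt.mpr (le_trans h2 hge''))
      · exact lt_of_lt_of_le (hYsub ⟨hyY, hyX⟩) (le_max_left _ _)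
    apply hfun_bad Y (i+1) hi' hμi'ℵ htrace
    have hlt' : hfun Y (i+1) < g β' (i+1) := hdY (i+1)
      (le_trans (le_max_right _ _) (le_trans hble hii'.le)) hi'
    have hdec := (hAs (i+1) hi').2.1 (hfun Y (i+1)) (g β' (i+1)) hlt'.le
      (hg.1 β' hβ'lt (i+1) hi')
    exact almostSub_trans hkey hdec
  exact ⟨U, hUunif, le_antisymm hchar_le hchar_ge⟩
end

section
/- Assume the setup: κ is a singular cardinal with cf(κ) = ρ, 2^ρ ≤ κ, and ρ < μ_0, where ⟨μ_i : i < ρ⟩ is an increasing sequence cofinal in κ, each μ_i carries a μ_i-complete uniform ultrafilter U_i with an almost-decreasing generating sequence ⟨A^i_η : η < θ_i⟩ of regular length θ_i with A^i_η ⊆ [μ_i^*, μ_i) where μ_i^* = sup_{i'<i} μ_{i'}; ⟨f_α : α < σ⟩ is a scale in ∏_{i<ρ} μ_i with σ regular and κ < σ; ⟨g_β : β < τ⟩ is a scale in ∏_{i<ρ} θ_i with τ regular and σ ≤ τ; E is a uniform ultrafilter on ρ; and for X ∈ E, α < σ, β < τ set Y_{X,α,β} = ⋃_{i∈X} (A^i_{g_β(i)}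 \ f_α(i)). Then the family {Y_{X,α,β} : X ∈ E, α < σ, β < τ} has cardinality τ, and for every n < ω, every γ < κ and all (X_k, α_k, β_k) ∈ E × σ × τ for k < n, the intersection ⋂_{k<n} Y_{X_k,α_k,β_k} contains an ordinal greater than γ; in particular the family generates a proper uniform filter on κ. -/
universe u

open Cardinal Set

section Helpers

lemma ub_of_mk {c : Cardinal.{u}} (hc : ℵ₀ ≤ c) {T : Set Ordinal.{u}}
    (hT : #T = Cardinal.lift.{u+1} c) {b : Ordinal.{u}} (hb : b < c.ord) :
    ∃ x ∈ T, b < x := by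
  by_contra h
  push_neg at h
  have hsub : T ⊆ Set.Iio (b+1) := fun x hx =>
    lt_of_le_of_lt (h x hx) (lt_add_one b)
  have h1 : #T ≤ Cardinal.lift.{u+1} (b+1).card :=
    le_of_le_of_eq (Cardinal.mk_le_mk_of_subset hsub) (Ordinal.mk_Iio_ordinal _)
  have h2 : (b+1).card < c := by
    rw [← Cardinal.lt_ord]
    exact (Cardinal.isSuccLimit_ord hc).succ_lt hb
  rw [hT] at h1
  exact absurd (Cardinal.lift_le.mp h1) (not_le.mpr h2)

lemma AlmostSub.trans' {κ : Cardinal.{u}} {A B C : Set Ordinal.{u}}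
    (h1 : AlmostSub κ A B) (h2 : AlmostSub κ B C) : AlmostSub κ A C := by
  obtain ⟨b1, hb1, h1⟩ := h1
  obtain ⟨b2, hb2, h2⟩ := h2
  refine ⟨max b1 b2, max_lt hb1 hb2, fun x hx => ?_⟩
  rcases em (x ∈ B) with hB | hB
  · exact Set.mem_Iio.mpr (lt_of_lt_of_le (Set.mem_Iio.mp (h2 ⟨hB, hx.2⟩)) (le_max_right _ _))
  · exact Set.mem_Iio.mpr (lt_of_lt_of_le (Set.mem_Iio.mp (h1 ⟨hx.1, hB⟩)) (le_max_left _ _))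

namespace UltrafilterOn
variable {κ : Cardinal.{u}}

lemma nonempty_of_mem (U : UltrafilterOn κ) {X : Set Ordinal.{u}} (hX : X ∈ U.sets) :
    X.Nonempty := by
  rcases Set.eq_empty_or_nonempty X with h | h
  · subst h; exact absurd hX U.empty_not_mem
  · exact h

lemma compl_Iio_mem_s1 (U : UltrafilterOn κ) (hU : U.IsUniform) {c : Ordinal.{u}}
    (hc : c < κ.ord) : Set.Iio κ.ord \ Set.Iio c ∈ U.sets := by
  rcases U.mem_or_compl_mem (Set.Iio c) (fun x hx => lt_trans hx hc) with h | h
  · exfalso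
    have h1 := hU _ h
    rw [Ordinal.mk_Iio_ordinal] at h1
    have hlt : c.card < κ := Cardinal.lt_ord.mp hc
    exact absurd (Cardinal.lift_injective h1) (ne_of_lt hlt)
  · exact h

lemma iInterFin_mem (U : UltrafilterOn κ) (n : ℕ) (s : Fin n → Set Ordinal.{u})
    (hs : ∀ k, s k ∈ U.sets) : Set.Iio κ.ord ∩ ⋂ k, s k ∈ U.sets := by
  induction n with
  | zero => simpa using U.univ_mem
  | succ n ih =>
    have h0 : Set.Iio κ.ord ∩ ⋂ k, s k
        = s 0 ∩ (Set.Iio κ.ord ∩ ⋂ (k : Fin n), s k.succ) := by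
      ext x
      simp only [Set.mem_inter_iff, Set.mem_iInter, Fin.forall_fin_succ]
      tauto
    rw [h0]
    exact U.inter_mem _ (hs 0) _ (ih (fun k => s k.succ) (fun k => hs k.succ))

end UltrafilterOn

lemma split_set {α : Type u} (s : Set α) (hs : ℵ₀ ≤ #(↥s)) :
    ∃ p : Set α, p ⊆ s ∧ #(↥p) = #(↥s) ∧ #(↥(s \ p)) = #(↥s) := by
  classical
  have h : #(↥s ⊕ ↥s) = #(↥s) := by
    simp [Cardinal.mk_sum, Cardinal.add_eq_self hs]
  obtain ⟨e⟩ := Cardinal.eq.mp h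
  set p : Set α := {x | ∃ h : x ∈ s, (e.symm ⟨x, h⟩).isLeft} with hpdef
  have hps : p ⊆ s := fun x hx => hx.1
  have hmkL : #(↥{y : ↥s | (e.symm y).isLeft}) = #(↥s) := by
    have h1 : {y : ↥s | (e.symm y).isLeft} = e '' (Set.range Sum.inl) := by
      rw [Equiv.image_eq_preimage_symm]
      ext y
      simp only [Set.mem_setOf_eq, Set.mem_preimage, Set.mem_range, Sum.isLeft_iff]
      exact ⟨fun ⟨a,ha⟩ => ⟨a, ha.symm⟩, fun ⟨a,ha⟩ => ⟨a, ha.symm⟩⟩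
    rw [h1, Cardinal.mk_image_eq e.injective, Cardinal.mk_range_eq _ Sum.inl_injective]
  have hmkR : #(↥{y : ↥s | ¬(e.symm y).isLeft}) = #(↥s) := by
    have h1 : {y : ↥s | ¬(e.symm y).isLeft} = e '' (Set.range Sum.inr) := by
      rw [Equiv.image_eq_preimage_symm]
      ext y
      simp only [Set.mem_setOf_eq, Set.mem_preimage, Set.mem_range, Sum.not_isLeft, Sum.isRight_iff]
      exact ⟨fun ⟨a,ha⟩ => ⟨a, ha.symm⟩, fun ⟨a,ha⟩ => ⟨a, ha.symm⟩⟩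
    rw [h1, Cardinal.mk_image_eq e.injective, Cardinal.mk_range_eq _ Sum.inr_injective]
  refine ⟨p, hps, ?_, ?_⟩
  · have him : p = Subtype.val '' {y : ↥s | (e.symm y).isLeft} := by
      ext x
      simp only [hpdef, Set.mem_image, Set.mem_setOf_eq]
      constructor
      · rintro ⟨h, hl⟩; exact ⟨⟨x, h⟩, hl, rfl⟩
      · rintro ⟨⟨y, hy⟩, hl, rfl⟩; exact ⟨hy, hl⟩
    rw [him, Cardinal.mk_image_eq Subtype.val_injective, hmkL]
  · have him : s \ p = Subtype.val '' {y : ↥s | ¬(e.symm y).isLeft} := by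
      ext x
      simp only [hpdef, Set.mem_image, Set.mem_setOf_eq, Set.mem_diff]
      constructor
      · rintro ⟨hxs, hnp⟩
        exact ⟨⟨x, hxs⟩, fun hl => hnp ⟨hxs, hl⟩, rfl⟩
      · rintro ⟨⟨y, hy⟩, hl, rfl⟩
        exact ⟨hy, fun ⟨h', hl'⟩ => hl hl'⟩
    rw [him, Cardinal.mk_image_eq Subtype.val_injective, hmkR]

lemma mk_sprod {α β : Type (u+1)} (s : Set α) (t : Set β) :
    #(↥(s ×ˢ t)) = #(↥s) * #(↥t) := by
  rw [Cardinal.mk_congr (Equiv.Set.prod s t), Cardinal.mk_prod, Cardinal.lift_id,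
    Cardinal.lift_id]

end Helpers

/-- the sets `Y X α β` form a family of cardinality `τ` whose finite
intersections are unbounded in `κ`; in particular they generate a proper uniform filter on `κ`. -/
theorem statement1
    (κ ρ σ τ : Cardinal.{u})
    (hκinf : ℵ₀ ≤ κ) (hκsing : κ.ord.cof < κ) (hκcof : κ.ord.cof = ρ)
    (h2ρ : 2 ^ ρ ≤ κ)
    (μ θ : Ordinal.{u} → Cardinal.{u})
    (hρμ0 : ρ < μ 0)
    (hμmono : ∀ i j, i < j → j < ρ.ord → μ i < μ j)
    (hμlt : ∀ i, i < ρ.ord → μ i < κ)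
    (hμcofinal : ∀ c, c < κ → ∃ i, i < ρ.ord ∧ c ≤ μ i)
    (hθreg : ∀ i, i < ρ.ord → (θ i).IsRegular)
    (Ui : (i : Ordinal.{u}) → UltrafilterOn (μ i))
    (A : Ordinal.{u} → Ordinal.{u} → Set Ordinal.{u})
    (hUi : ∀ i, i < ρ.ord → (Ui i).IsUniform ∧ (Ui i).IsComplete ∧
      (Ui i).IsADGenSeq (θ i).ord (A i))
    (hAsub : ∀ i, i < ρ.ord → ∀ η, η < (θ i).ord →
      A i η ⊆ Set.Ico (supBelow μ i).ord (μ i).ord)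
    (f g : Ordinal.{u} → Ordinal.{u} → Ordinal.{u})
    (hσreg : σ.IsRegular) (hκσ : κ < σ)
    (hf : IsScale ρ.ord μ σ f)
    (hτreg : τ.IsRegular) (hστ : σ ≤ τ)
    (hg : IsScale ρ.ord θ τ g)
    (E : UltrafilterOn ρ) (hE : E.IsUniform)
    (Y : Set Ordinal.{u} → Ordinal.{u} → Ordinal.{u} → Set Ordinal.{u})
    (hY : ∀ X α β, Y X α β = ⋃ i ∈ X, (A i (g β i) \ Set.Iio (f α i)))
    :
    #({S : Set Ordinal.{u} | ∃ X ∈ E.sets, ∃ α, α < σ.ord ∧ ∃ β, β < τ.ord ∧ S = Y X α β})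
        = Cardinal.lift.{u + 1, u} τ ∧
    (∀ n : ℕ, ∀ γ, γ < κ.ord →
      ∀ Xs : Fin n → Set Ordinal.{u}, ∀ αs βs : Fin n → Ordinal.{u},
      (∀ k, Xs k ∈ E.sets) → (∀ k, αs k < σ.ord) → (∀ k, βs k < τ.ord) →
      ∃ δ, γ < δ ∧ δ < κ.ord ∧ ∀ k, δ ∈ Y (Xs k) (αs k) (βs k)) ∧
    (∀ Z, Z ⊆ Set.Iio κ.ord →
      (∃ (n : ℕ) (Xs : Fin n → Set Ordinal.{u}) (αs βs : Fin n → Ordinal.{u}),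
        (∀ k, Xs k ∈ E.sets) ∧ (∀ k, αs k < σ.ord) ∧ (∀ k, βs k < τ.ord) ∧
        Set.Iio κ.ord ∩ (⋂ k, Y (Xs k) (αs k) (βs k)) ⊆ Z) →
      #Z = Cardinal.lift.{u + 1, u} κ) := by
  classical
  -- basic cardinal facts
  have hρinf : ℵ₀ ≤ ρ := by
    rw [← hκcof]
    exact Ordinal.aleph0_le_cof.mpr (Cardinal.isSuccLimit_ord hκinf)
  have hσinf : ℵ₀ ≤ σ := hσreg.1
  have hτinf : ℵ₀ ≤ τ := hτreg.1
  have hκτ : κ ≤ τ := le_of_lt (lt_of_lt_of_le hκσ hστ)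
  have hρμ : ∀ i, i < ρ.ord → ρ < μ i := by
    intro i hi
    rcases eq_or_ne i 0 with rfl | hne
    · exact hρμ0
    · exact lt_of_lt_of_le hρμ0 (le_of_lt (hμmono 0 i (pos_iff_ne_zero.mpr hne) hi))
  have hμinf : ∀ i, i < ρ.ord → ℵ₀ ≤ μ i := fun i hi =>
    le_of_lt (lt_of_le_of_lt hρinf (hρμ i hi))
  have h0σ : (0 : Ordinal.{u}) < σ.ord := by
    have h1 : (0 : Cardinal.{u}) < σ := lt_of_lt_of_le Cardinal.aleph0_pos hσinf
    have := Cardinal.ord_lt_ord.mpr h1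
    rwa [Cardinal.ord_zero] at this
  have hgmem : ∀ β, β < τ.ord → ∀ i, i < ρ.ord → g β i < (θ i).ord := fun β hβ i hi =>
    hg.1 β hβ i hi
  have hfmem : ∀ α, α < σ.ord → ∀ i, i < ρ.ord → f α i < (μ i).ord := fun α hα i hi =>
    hf.1 α hα i hi
  -- supBelow bounds
  have hsupB : ∀ i i', i' < i → i < ρ.ord → μ i' ≤ supBelow μ i := by
    intro i i' hi'i hi
    apply le_csSup
    · refine ⟨κ, fun c hc => ?_⟩
      obtain ⟨i'', hi'', rfl⟩ := hc
      exact (hμlt i'' (hi''.trans hi)).le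
    · exact ⟨i', hi'i, rfl⟩
  -- membership of the basic blocks in `Ui i`
  have hAmem : ∀ i, i < ρ.ord → ∀ α, α < σ.ord → ∀ β, β < τ.ord →
      A i (g β i) \ Set.Iio (f α i) ∈ (Ui i).sets := by
    intro i hi α hα β hβ
    have hA : A i (g β i) ∈ (Ui i).sets := (hUi i hi).2.2.1 _ (hgmem β hβ i hi)
    have hC : Set.Iio (μ i).ord \ Set.Iio (f α i) ∈ (Ui i).sets :=
      (Ui i).compl_Iio_mem_s1 (hUi i hi).1 (hfmem α hα i hi)
    have heq : A i (g β i) \ Set.Iio (f α i)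
        = A i (g β i) ∩ (Set.Iio (μ i).ord \ Set.Iio (f α i)) := by
      ext x
      constructor
      · intro hx
        exact ⟨hx.1, ⟨(Ui i).sets_subset _ hA hx.1, hx.2⟩⟩
      · intro hx
        exact ⟨hx.1, hx.2.2⟩
    rw [heq]
    exact (Ui i).inter_mem _ hA _ hC
  -- unboundedness of members of E
  have hXunb : ∀ X, X ∈ E.sets → ∀ b, b < ρ.ord → ∃ i, i ∈ X ∧ b < i ∧ i < ρ.ord := by
    intro X hX b hb
    obtain ⟨i, hiX, hbi⟩ := ub_of_mk hρinf (hE X hX) hb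
    exact ⟨i, hiX, hbi, E.sets_subset X hX hiX⟩
  -- Part 2 : finite intersections are unbounded
  have part2 : ∀ n : ℕ, ∀ γ, γ < κ.ord →
      ∀ Xs : Fin n → Set Ordinal.{u}, ∀ αs βs : Fin n → Ordinal.{u},
      (∀ k, Xs k ∈ E.sets) → (∀ k, αs k < σ.ord) → (∀ k, βs k < τ.ord) →
      ∃ δ, γ < δ ∧ δ < κ.ord ∧ ∀ k, δ ∈ Y (Xs k) (αs k) (βs k) := by
    intro n γ hγ Xs αs βs hXs hαs hβs
    obtain ⟨i₀, hi₀, hγi₀⟩ := hμcofinal γ.card (Cardinal.lt_ord.mp hγ)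
    obtain ⟨i, hiX, hi₀i, hiρ⟩ :=
      hXunb _ (E.iInterFin_mem n Xs hXs) i₀ hi₀
    have hγμi : γ < (μ i).ord :=
      Cardinal.lt_ord.mpr (lt_of_le_of_lt hγi₀ (hμmono i₀ i hi₀i hiρ))
    have hγ1 : γ + 1 < (μ i).ord := by
      rw [Ordinal.add_one_eq_succ]
      exact (Cardinal.isSuccLimit_ord (hμinf i hiρ)).succ_lt hγμi
    set t : Fin (n+1) → Set Ordinal.{u} :=
      Fin.cons (Set.Iio (μ i).ord \ Set.Iio (γ+1))
        (fun k => A i (g (βs k) i) \ Set.Iio (f (αs k) i)) with ht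
    have htmem : ∀ k, t k ∈ (Ui i).sets := by
      intro k
      refine Fin.cases ?_ ?_ k
      · rw [ht]; simpa using (Ui i).compl_Iio_mem_s1 (hUi i hiρ).1 hγ1
      · intro m
        rw [ht]
        simpa using hAmem i hiρ (αs m) (hαs m) (βs m) (hβs m)
    obtain ⟨δ, hδ⟩ := (Ui i).nonempty_of_mem ((Ui i).iInterFin_mem (n+1) t htmem)
    have hδμ : δ < (μ i).ord := hδ.1
    have hδ0 : δ ∈ t 0 := Set.mem_iInter.mp hδ.2 0
    have hδk : ∀ k : Fin n, δ ∈ A i (g (βs k) i) \ Set.Iio (f (αs k) i) := by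
      intro k
      have := Set.mem_iInter.mp hδ.2 k.succ
      rwa [ht, Fin.cons_succ] at this
    rw [ht, Fin.cons_zero] at hδ0
    refine ⟨δ, ?_, lt_trans hδμ (Cardinal.ord_lt_ord.mpr (hμlt i hiρ)), ?_⟩
    · by_contra hc
      exact hδ0.2 (Set.mem_Iio.mpr (lt_of_le_of_lt (not_lt.mp hc) (lt_add_one γ)))
    · intro k
      rw [hY]
      exact Set.mem_biUnion (Set.mem_iInter.mp hiX.2 k) (hδk k)
  -- Part 3 : uniformity of the generated filter
  have part3 : ∀ Z, Z ⊆ Set.Iio κ.ord →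
      (∃ (n : ℕ) (Xs : Fin n → Set Ordinal.{u}) (αs βs : Fin n → Ordinal.{u}),
        (∀ k, Xs k ∈ E.sets) ∧ (∀ k, αs k < σ.ord) ∧ (∀ k, βs k < τ.ord) ∧
        Set.Iio κ.ord ∩ (⋂ k, Y (Xs k) (αs k) (βs k)) ⊆ Z) →
      #Z = Cardinal.lift.{u + 1, u} κ := by
    rintro Z hZsub ⟨n, Xs, αs, βs, hXs, hαs, hβs, hWZ⟩
    have hZle : #Z ≤ Cardinal.lift.{u+1, u} κ := by
      have := Cardinal.mk_le_mk_of_subset hZsub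
      rwa [Ordinal.mk_Iio_ordinal, Cardinal.card_ord] at this
    refine le_antisymm hZle ?_
    by_contra hlt
    obtain ⟨c₀, hc₀⟩ := Cardinal.mem_range_lift_of_le hZle
    have hc₀κ : c₀ < κ := by
      rw [← Cardinal.lift_lt.{u, u+1}, hc₀]
      exact not_le.mp hlt
    obtain ⟨i₀, hi₀, hci₀⟩ := hμcofinal c₀ hc₀κ
    obtain ⟨i, hiX, hi₀i, hiρ⟩ := hXunb _ (E.iInterFin_mem n Xs hXs) i₀ hi₀
    set S : Set Ordinal.{u} :=
      Set.Iio (μ i).ord ∩ ⋂ k, (A i (g (βs k) i) \ Set.Iio (f (αs k) i)) with hS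
    have hSmem : S ∈ (Ui i).sets :=
      (Ui i).iInterFin_mem n _ (fun k => hAmem i hiρ (αs k) (hαs k) (βs k) (hβs k))
    have hScard : #S = Cardinal.lift.{u+1, u} (μ i) := (hUi i hiρ).1 _ hSmem
    have hSZ : S ⊆ Z := by
      intro x hx
      apply hWZ
      refine ⟨Set.mem_Iio.mpr (lt_trans hx.1 (Cardinal.ord_lt_ord.mpr (hμlt i hiρ))), ?_⟩
      refine Set.mem_iInter.mpr fun k => ?_
      rw [hY]
      exact Set.mem_biUnion (Set.mem_iInter.mp hiX.2 k) (Set.mem_iInter.mp hx.2 k)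
    have h1 : Cardinal.lift.{u+1, u} (μ i) ≤ Cardinal.lift.{u+1, u} c₀ := by
      rw [← hScard, hc₀]
      exact Cardinal.mk_le_mk_of_subset hSZ
    have h2 : μ i ≤ c₀ := Cardinal.lift_le.mp h1
    exact absurd (lt_of_le_of_lt h2 (lt_of_le_of_lt hci₀ (hμmono i₀ i hi₀i hiρ)))
      (lt_irrefl _)
  -- Part 1 : cardinality of the family
  have hFle : #({S : Set Ordinal.{u} | ∃ X ∈ E.sets, ∃ α, α < σ.ord ∧ ∃ β, β < τ.ord ∧
      S = Y X α β}) ≤ Cardinal.lift.{u + 1, u} τ := by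
    have hsub : {S : Set Ordinal.{u} | ∃ X ∈ E.sets, ∃ α, α < σ.ord ∧ ∃ β, β < τ.ord ∧
        S = Y X α β}
        ⊆ (fun p : Set Ordinal.{u} × Ordinal.{u} × Ordinal.{u} => Y p.1 p.2.1 p.2.2) ''
          (E.sets ×ˢ (Set.Iio σ.ord ×ˢ Set.Iio τ.ord)) := by
      rintro S ⟨X, hX, α, hα, β, hβ, rfl⟩
      exact ⟨(X, α, β), ⟨hX, hα, hβ⟩, rfl⟩
    have h1 := (Cardinal.mk_le_mk_of_subset hsub).trans Cardinal.mk_image_le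
    have h2 : #(↥(E.sets ×ˢ (Set.Iio σ.ord ×ˢ Set.Iio τ.ord)))
        = #(↥E.sets) * (Cardinal.lift.{u+1, u} σ * Cardinal.lift.{u+1, u} τ) := by
      rw [mk_sprod, mk_sprod, Ordinal.mk_Iio_ordinal, Ordinal.mk_Iio_ordinal,
        Cardinal.card_ord, Cardinal.card_ord]
    have hE2 : #(↥E.sets) ≤ Cardinal.lift.{u+1, u} κ := by
      have hsub2 : E.sets ⊆ 𝒫 (Set.Iio ρ.ord) := fun X hX => E.sets_subset X hX
      have h3 := (Cardinal.mk_le_mk_of_subset hsub2).trans_eq (Cardinal.mk_powerset _)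
      rw [Ordinal.mk_Iio_ordinal, Cardinal.card_ord] at h3
      calc #(↥E.sets) ≤ 2 ^ Cardinal.lift.{u+1, u} ρ := h3
        _ = Cardinal.lift.{u+1, u} (2 ^ ρ) := by
            rw [Cardinal.lift_power, Cardinal.lift_two]
        _ ≤ Cardinal.lift.{u+1, u} κ := Cardinal.lift_le.mpr h2ρ
    have hmul1 : Cardinal.lift.{u+1, u} σ * Cardinal.lift.{u+1, u} τ
        ≤ Cardinal.lift.{u+1, u} τ :=
      le_trans (Cardinal.mul_le_max _ _)
        (max_le (max_le (Cardinal.lift_le.mpr hστ) le_rfl)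
          (Cardinal.aleph0_le_lift.mpr hτinf))
    have hmul2 : #(↥E.sets) * (Cardinal.lift.{u+1, u} σ * Cardinal.lift.{u+1, u} τ)
        ≤ Cardinal.lift.{u+1, u} τ :=
      le_trans (Cardinal.mul_le_max _ _)
        (max_le (max_le (hE2.trans (Cardinal.lift_le.mpr hκτ)) hmul1)
          (Cardinal.aleph0_le_lift.mpr hτinf))
    exact le_trans (h1.trans_eq h2) hmul2
  -- the fibers of `β ↦ Y (Iio ρ.ord) 0 β` are small
  have hfiber : ∀ W : Set Ordinal.{u},
      #({β : Ordinal.{u} | β < τ.ord ∧ Y (Set.Iio ρ.ord) 0 β = W})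
        ≠ Cardinal.lift.{u+1, u} τ := by
    intro W hTc
    set T := {β : Ordinal.{u} | β < τ.ord ∧ Y (Set.Iio ρ.ord) 0 β = W} with hTdef
    have hTsub : ∀ β ∈ T, β < τ.ord := fun β hβ => hβ.1
    have hTY : ∀ β ∈ T, Y (Set.Iio ρ.ord) 0 β = W := fun β hβ => hβ.2
    obtain ⟨β₀, hβ₀⟩ : T.Nonempty := by
      rw [← Set.nonempty_coe_sort, ← Cardinal.mk_ne_zero_iff, hTc]
      simp only [ne_eq, Cardinal.lift_eq_zero]
      exact (Cardinal.aleph0_pos.trans_le hτinf).ne'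
    -- the restriction of `Y (Iio ρ.ord) 0 β` to the `i`-th block
    have hYres : ∀ β, β < τ.ord → ∀ i, i < ρ.ord →
        Y (Set.Iio ρ.ord) 0 β ∩ Set.Ico (supBelow μ i).ord (μ i).ord
          = A i (g β i) \ Set.Iio (f 0 i) := by
      intro β hβ i hi
      rw [hY]
      ext x
      simp only [Set.mem_inter_iff, Set.mem_iUnion, Set.mem_diff, Set.mem_Iio,
        Set.mem_Ico, exists_prop]
      constructor
      · rintro ⟨⟨i', hi', hx⟩, hxlo, hxhi⟩
        rcases lt_trichotomy i' i with hlt | hEq | hgt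
        · exfalso
          have hxA := hAsub i' hi' _ (hgmem β hβ i' hi') hx.1
          have hxb : x < (supBelow μ i).ord :=
            lt_of_lt_of_le hxA.2 (Cardinal.ord_le_ord.mpr (hsupB i i' hlt hi))
          exact absurd hxlo (not_le.mpr hxb)
        · subst hEq; exact hx
        · exfalso
          have hxA := hAsub i' hi' _ (hgmem β hβ i' hi') hx.1
          have hxb : (μ i).ord ≤ x :=
            le_trans (Cardinal.ord_le_ord.mpr (hsupB i' i hgt hi')) hxA.1
          exact absurd hxhi (not_lt.mpr hxb)
      · intro hx
        have hxA := hAsub i hi _ (hgmem β hβ i hi) hx.1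
        exact ⟨⟨i, hi, hx⟩, hxA.1, hxA.2⟩
    have hkey : ∀ β ∈ T, ∀ i, i < ρ.ord →
        A i (g β i) \ Set.Iio (f 0 i) = A i (g β₀ i) \ Set.Iio (f 0 i) := by
      intro β hβ i hi
      rw [← hYres β (hTsub β hβ) i hi, ← hYres β₀ (hTsub β₀ hβ₀) i hi,
        hTY β hβ, hTY β₀ hβ₀]
    -- some coordinate where `g β` for `β ∈ T` is unbounded
    have hC : ∃ i, i < ρ.ord ∧ ∀ b, b < (θ i).ord → ∃ β ∈ T, b < g β i := by
      by_contra hc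
      push_neg at hc
      choose b hb1 hb2 using hc
      set h : Ordinal.{u} → Ordinal.{u} :=
        fun i => if hi : i < ρ.ord then b i hi + 1 else 0 with hhdef
      have hhp : InProd ρ.ord θ h := by
        intro i hi
        rw [hhdef]
        simp only [dif_pos hi]
        rw [Ordinal.add_one_eq_succ]
        exact (Cardinal.isSuccLimit_ord (hθreg i hi).1).succ_lt (hb1 i hi)
      obtain ⟨η, hη, i₁, hi₁, hdom1⟩ := hg.2.2 h hhp
      obtain ⟨β, hβT, hηβ⟩ := ub_of_mk hτinf hTc hη
      obtain ⟨i₂, hi₂, hdom2⟩ := hg.2.1 η β hηβ (hTsub β hβT)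
      have hiρ2 : max i₁ i₂ < ρ.ord := max_lt hi₁ hi₂
      have e1 : h (max i₁ i₂) < g η (max i₁ i₂) := hdom1 _ (le_max_left _ _) hiρ2
      have e2 : g η (max i₁ i₂) < g β (max i₁ i₂) := hdom2 _ (le_max_right _ _) hiρ2
      have e3 : g β (max i₁ i₂) ≤ b _ hiρ2 := hb2 _ hiρ2 β hβT
      have e5 := (e1.trans e2).trans_le e3
      rw [hhdef] at e5
      simp only [dif_pos hiρ2] at e5
      exact absurd e5 (not_lt.mpr (le_of_lt (lt_add_one _)))
    obtain ⟨is, hisρ, hunb⟩ := hC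
    have hη₀ : g β₀ is < (θ is).ord := hgmem β₀ (hTsub β₀ hβ₀) is hisρ
    have hA'mem : A is (g β₀ is) ∈ (Ui is).sets := (hUi is hisρ).2.2.1 _ hη₀
    have hcs : f 0 is < (μ is).ord := hfmem 0 h0σ is hisρ
    -- `A is (g β₀ is)` is almost contained in every member of `Ui is`
    have hbase : ∀ X ∈ (Ui is).sets, AlmostSub (μ is) (A is (g β₀ is)) X := by
      intro X hX
      obtain ⟨AY, hAYb, hAYX⟩ := (hUi is hisρ).2.2.2.2.2 X hX
      obtain ⟨η, hηθ, rfl⟩ := hAYb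
      have hstep : AlmostSub (μ is) (A is (g β₀ is)) (A is η) := by
        rcases le_or_gt η (g β₀ is) with hle | hlt
        · exact (hUi is hisρ).2.2.2.1 η (g β₀ is) hle hη₀
        · obtain ⟨β, hβT, hgt⟩ := hunb η hηθ
          obtain ⟨bb, hbbμ, hbbsub⟩ :=
            (hUi is hisρ).2.2.2.1 η (g β is) hgt.le (hgmem β (hTsub β hβT) is hisρ)
          refine ⟨max bb (f 0 is), max_lt hbbμ hcs, fun x hx => ?_⟩
          rcases lt_or_ge x (f 0 is) with hxf | hxf
          · exact Set.mem_Iio.mpr (lt_of_lt_of_le hxf (le_max_right _ _))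
          · have hx1 : x ∈ A is (g β₀ is) \ Set.Iio (f 0 is) :=
              ⟨hx.1, fun hcon => absurd hxf (not_le.mpr hcon)⟩
            rw [← hkey β hβT is hisρ] at hx1
            exact Set.mem_Iio.mpr (lt_of_lt_of_le
              (Set.mem_Iio.mp (hbbsub ⟨hx1.1, hx.2⟩)) (le_max_left _ _))
      exact hstep.trans' hAYX
    -- contradiction by splitting `A is (g β₀ is)`
    have hA'card : #(↥(A is (g β₀ is))) = Cardinal.lift.{u+1, u} (μ is) :=
      (hUi is hisρ).1 _ hA'mem
    have hA'inf : ℵ₀ ≤ #(↥(A is (g β₀ is))) := by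
      rw [hA'card]; exact Cardinal.aleph0_le_lift.mpr (hμinf is hisρ)
    obtain ⟨p, hps, hp1, hp2⟩ := split_set _ hA'inf
    have hpsub : p ⊆ Set.Iio (μ is).ord := hps.trans ((Ui is).sets_subset _ hA'mem)
    have hbound : ∀ (s : Set Ordinal.{u}) (bb : Ordinal.{u}), bb < (μ is).ord →
        s ⊆ Set.Iio bb → #(↥s) ≠ Cardinal.lift.{u+1, u} (μ is) := by
      intro s bb hbb hsb hcard
      have h4 := (Cardinal.mk_le_mk_of_subset hsb).trans_eq (Ordinal.mk_Iio_ordinal bb)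
      rw [hcard] at h4
      exact absurd (Cardinal.lift_le.mp h4) (not_le.mpr (Cardinal.lt_ord.mp hbb))
    rcases (Ui is).mem_or_compl_mem p hpsub with hmem | hmem
    · obtain ⟨bb, hbbμ, hbbsub⟩ := hbase p hmem
      exact hbound _ bb hbbμ hbbsub (hp2.trans hA'card)
    · obtain ⟨bb, hbbμ, hbbsub⟩ := hbase _ hmem
      have hsub3 : p ⊆ Set.Iio bb := fun x hx => hbbsub ⟨hps hx, fun hcon => hcon.2 hx⟩
      exact hbound p bb hbbμ hsub3 (hp1.trans hA'card)
  -- pigeonhole : the family has at least `τ` members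
  have hFge : Cardinal.lift.{u+1, u} τ ≤
      #({S : Set Ordinal.{u} | ∃ X ∈ E.sets, ∃ α, α < σ.ord ∧ ∃ β, β < τ.ord ∧
        S = Y X α β}) := by
    by_contra hlt
    rw [not_le] at hlt
    set F := {S : Set Ordinal.{u} | ∃ X ∈ E.sets, ∃ α, α < σ.ord ∧ ∃ β, β < τ.ord ∧
        S = Y X α β} with hFdef
    have hcover : Set.Iio τ.ord ⊆ ⋃ (Wp : ↥F),
        {β : Ordinal.{u} | β < τ.ord ∧ Y (Set.Iio ρ.ord) 0 β = (Wp : Set Ordinal.{u})} := by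
      intro β hβ
      have hmemF : Y (Set.Iio ρ.ord) 0 β ∈ F :=
        ⟨Set.Iio ρ.ord, E.univ_mem, 0, h0σ, β, hβ, rfl⟩
      exact Set.mem_iUnion.mpr ⟨⟨_, hmemF⟩, ⟨hβ, rfl⟩⟩
    have hreglift : (Cardinal.lift.{u+1, u} τ).IsRegular := by
      refine ⟨Cardinal.aleph0_le_lift.mpr hτinf, ?_⟩
      rw [← Cardinal.lift_ord, ← Ordinal.lift_cof]
      exact Cardinal.lift_le.mpr hτreg.2
    have h1 : Cardinal.lift.{u+1, u} τ ≤ Cardinal.sum (fun Wp : ↥F =>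
        #({β : Ordinal.{u} | β < τ.ord ∧ Y (Set.Iio ρ.ord) 0 β = (Wp : Set Ordinal.{u})})) := by
      calc Cardinal.lift.{u+1, u} τ = #(Set.Iio τ.ord) := by
            rw [Ordinal.mk_Iio_ordinal, Cardinal.card_ord]
        _ ≤ #(⋃ (Wp : ↥F), {β : Ordinal.{u} | β < τ.ord ∧
              Y (Set.Iio ρ.ord) 0 β = (Wp : Set Ordinal.{u})}) :=
            Cardinal.mk_le_mk_of_subset hcover
        _ ≤ _ := Cardinal.mk_iUnion_le_sum_mk
    have h2 : Cardinal.sum (fun Wp : ↥F =>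
        #({β : Ordinal.{u} | β < τ.ord ∧ Y (Set.Iio ρ.ord) 0 β = (Wp : Set Ordinal.{u})}))
          < Cardinal.lift.{u+1, u} τ := by
      refine Cardinal.sum_lt_of_isRegular hreglift hlt (fun Wp => ?_)
      refine lt_of_le_of_ne ?_ (hfiber Wp.1)
      have hsubfib : {β : Ordinal.{u} | β < τ.ord ∧
          Y (Set.Iio ρ.ord) 0 β = (Wp : Set Ordinal.{u})} ⊆ Set.Iio τ.ord :=
        fun β hβ => hβ.1
      have h5 := (Cardinal.mk_le_mk_of_subset hsubfib).trans_eq (Ordinal.mk_Iio_ordinal _)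
      rwa [Cardinal.card_ord] at h5
    exact absurd (h1.trans_lt h2) (lt_irrefl _)
  exact ⟨le_antisymm hFle hFge, part2, part3⟩
end

section
/- Assume the setup: κ is a singular cardinal with cf(κ) = ρ, 2^ρ ≤ κ, and ρ < μ_0, where ⟨μ_i : i < ρ⟩ is an increasing sequence cofinal in κ, each μ_i carries a μ_i-complete uniform ultrafilter U_i with an almost-decreasing generating sequence ⟨A^i_η : η < θ_i⟩ of regular length θ_i with A^i_η ⊆ [μ_i^*, μ_i) where μ_i^* = sup_{i'<i} μ_{i'}; ⟨f_α : α < σ⟩ is a scale in ∏_{i<ρ} μ_i with σ regular and κ < σ; ⟨g_β : β < τ⟩ is a scale in ∏_{i<ρ} θ_i with τ regular and σ ≤ τ; E is a uniform ultrafilter on ρ; and for X ∈ E, α < σ, β < τ set Y_{X,α,β} = ⋃_{i∈X} (A^i_{g_β(i)} \ f_α(i)). Then for every set Y ⊆ κ there exist X ∈ E, α < σ and β < τ such that either Y_{X,α,β} ⊆ Y or Y_{X,α,β} ⊆ κ \ Y; consequently the filter on κ generated by the sets Y_{X,α,β} is an ultrafilter. -/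
universe u

open Cardinal Set

/-- for every `Z ⊆ κ` some `Y X α β` is contained in `Z` or in its
complement; consequently the filter generated by the sets `Y X α β` is an ultrafilter. -/
theorem statement2
    (κ ρ σ τ : Cardinal.{u})
    (hκinf : ℵ₀ ≤ κ) (hκsing : κ.ord.cof < κ) (hκcof : κ.ord.cof = ρ)
    (h2ρ : 2 ^ ρ ≤ κ)
    (μ θ : Ordinal.{u} → Cardinal.{u})
    (hρμ0 : ρ < μ 0)
    (hμmono : ∀ i j, i < j → j < ρ.ord → μ i < μ j)
    (hμlt : ∀ i, i < ρ.ord → μ i < κ)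
    (hμcofinal : ∀ c, c < κ → ∃ i, i < ρ.ord ∧ c ≤ μ i)
    (hθreg : ∀ i, i < ρ.ord → (θ i).IsRegular)
    (Ui : (i : Ordinal.{u}) → UltrafilterOn (μ i))
    (A : Ordinal.{u} → Ordinal.{u} → Set Ordinal.{u})
    (hUi : ∀ i, i < ρ.ord → (Ui i).IsUniform ∧ (Ui i).IsComplete ∧
      (Ui i).IsADGenSeq (θ i).ord (A i))
    (hAsub : ∀ i, i < ρ.ord → ∀ η, η < (θ i).ord →
      A i η ⊆ Set.Ico (supBelow μ i).ord (μ i).ord)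
    (f g : Ordinal.{u} → Ordinal.{u} → Ordinal.{u})
    (hσreg : σ.IsRegular) (hκσ : κ < σ)
    (hf : IsScale ρ.ord μ σ f)
    (hτreg : τ.IsRegular) (hστ : σ ≤ τ)
    (hg : IsScale ρ.ord θ τ g)
    (E : UltrafilterOn ρ) (hE : E.IsUniform)
    (Y : Set Ordinal.{u} → Ordinal.{u} → Ordinal.{u} → Set Ordinal.{u})
    (hY : ∀ X α β, Y X α β = ⋃ i ∈ X, (A i (g β i) \ Set.Iio (f α i)))
    :
    (∀ Z, Z ⊆ Set.Iio κ.ord → ∃ X ∈ E.sets, ∃ α, α < σ.ord ∧ ∃ β, β < τ.ord ∧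
      (Y X α β ⊆ Z ∨ Y X α β ⊆ Set.Iio κ.ord \ Z)) ∧
    ∃ W : UltrafilterOn κ, W.sets =
      {Z | Z ⊆ Set.Iio κ.ord ∧
        ∃ X ∈ E.sets, ∃ α, α < σ.ord ∧ ∃ β, β < τ.ord ∧ Y X α β ⊆ Z} := by
  classical
  have hρ0 : ℵ₀ ≤ ρ := by
    rw [← hκcof]; exact Ordinal.aleph0_le_cof.2 (Cardinal.isSuccLimit_ord hκinf)
  have hρordpos : (0 : Ordinal.{u}) < ρ.ord := by
    rw [Cardinal.lt_ord, Ordinal.card_zero]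
    exact lt_of_lt_of_le Cardinal.aleph0_pos hρ0
  have hμposC : ∀ i, i < ρ.ord → 0 < μ i := by
    intro i hi
    rcases eq_or_ne i 0 with rfl | hne
    · exact lt_of_le_of_lt (zero_le (a := ρ)) hρμ0
    · exact lt_of_le_of_lt (zero_le (a := ρ))
        (lt_trans hρμ0 (hμmono 0 i (pos_iff_ne_zero.2 hne) hi))
  have hμordpos : ∀ i, i < ρ.ord → (0 : Ordinal.{u}) < (μ i).ord := by
    intro i hi
    rw [Cardinal.lt_ord, Ordinal.card_zero]
    exact hμposC i hi
  have htail : ∀ j, j < ρ.ord → (Set.Iio ρ.ord \ Set.Iio j) ∈ E.sets := by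
    intro j hj
    rcases E.mem_or_compl_mem (Set.Iio j ∩ Set.Iio ρ.ord) Set.inter_subset_right with h | h
    · exfalso
      have h1 := hE _ h
      have h2 : #(Set.Iio j ∩ Set.Iio ρ.ord : Set Ordinal.{u}) < Cardinal.lift.{u+1} ρ := by
        calc #(Set.Iio j ∩ Set.Iio ρ.ord : Set Ordinal.{u}) ≤ #(Set.Iio j) :=
              Cardinal.mk_le_mk_of_subset Set.inter_subset_left
          _ = Cardinal.lift.{u+1} j.card := Ordinal.mk_Iio_ordinal j
          _ < Cardinal.lift.{u+1} ρ := Cardinal.lift_lt.2 (Cardinal.lt_ord.1 hj)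
      exact absurd h1 (ne_of_lt h2)
    · have heq : Set.Iio ρ.ord \ (Set.Iio j ∩ Set.Iio ρ.ord) = Set.Iio ρ.ord \ Set.Iio j := by
        ext x; simp only [Set.mem_diff, Set.mem_inter_iff, Set.mem_Iio]; tauto
      rwa [heq] at h
  have hσ0 : (0 : Ordinal.{u}) < σ.ord := hσreg.ord_pos
  have hτ0 : (0 : Ordinal.{u}) < τ.ord := hτreg.ord_pos
  -- main dichotomy
  have main : ∀ Z, Z ⊆ Set.Iio κ.ord → ∃ X ∈ E.sets, ∃ α, α < σ.ord ∧ ∃ β, β < τ.ord ∧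
      (Y X α β ⊆ Z ∨ Y X α β ⊆ Set.Iio κ.ord \ Z) := by
    intro Z hZ
    have hchoice : ∀ i, i < ρ.ord → ∃ η, η < (θ i).ord ∧ ∃ b, b < (μ i).ord ∧
        ((Z ∩ Set.Iio (μ i).ord ∈ (Ui i).sets ∧
            A i η \ (Z ∩ Set.Iio (μ i).ord) ⊆ Set.Iio b) ∨
         (Z ∩ Set.Iio (μ i).ord ∉ (Ui i).sets ∧
            A i η \ (Set.Iio (μ i).ord \ Z) ⊆ Set.Iio b)) := by
      intro i hi
      obtain ⟨hunif, hcomp, hmem, hdec, hbase⟩ := hUi i hi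
      rcases (Ui i).mem_or_compl_mem (Z ∩ Set.Iio (μ i).ord) Set.inter_subset_right with
        hin | hout
      · obtain ⟨Y', hY'base, hAS⟩ := hbase.2 _ hin
        obtain ⟨η, hη, rfl⟩ := hY'base
        obtain ⟨b, hb, hbs⟩ := hAS
        exact ⟨η, hη, b, hb, Or.inl ⟨hin, hbs⟩⟩
      · have heq : Set.Iio (μ i).ord \ (Z ∩ Set.Iio (μ i).ord) = Set.Iio (μ i).ord \ Z := by
          ext x; simp only [Set.mem_diff, Set.mem_inter_iff, Set.mem_Iio]; tauto
        rw [heq] at hout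
        obtain ⟨Y', hY'base, hAS⟩ := hbase.2 _ hout
        obtain ⟨η, hη, rfl⟩ := hY'base
        obtain ⟨b, hb, hbs⟩ := hAS
        refine ⟨η, hη, b, hb, Or.inr ⟨?_, hbs⟩⟩
        intro hinZ
        have h0 := (Ui i).inter_mem _ hinZ _ hout
        have hempty : Z ∩ Set.Iio (μ i).ord ∩ (Set.Iio (μ i).ord \ Z) = ∅ := by
          ext x; simp only [Set.mem_inter_iff, Set.mem_diff, Set.mem_Iio,
            Set.mem_empty_iff_false, iff_false]; tauto
        rw [hempty] at h0
        exact (Ui i).empty_not_mem h0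
    choose η hηlt b hblt hdisj using hchoice
    obtain ⟨η', hη'eq, hη'In⟩ : ∃ η' : Ordinal.{u} → Ordinal.{u},
        (∀ i (hi : i < ρ.ord), η' i = η i hi) ∧ InProd ρ.ord θ η' :=
      ⟨fun i => if h : i < ρ.ord then η i h else 0,
       fun i hi => dif_pos hi,
       fun i hi => by simp only [dif_pos hi]; exact hηlt i hi⟩
    obtain ⟨β, hβ, i₀, hi₀, hβdom⟩ := hg.2.2 η' hη'In
    have hcex : ∀ i, i < ρ.ord → ∃ c, c < (μ i).ord ∧
        (i₀ ≤ i → A i (g β i) \ A i (η' i) ⊆ Set.Iio c) := by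
      intro i hi
      by_cases hcase : i₀ ≤ i
      · have hlt : η' i < g β i := hβdom i hcase hi
        obtain ⟨hunif, hcomp, hmem, hdec, hbase⟩ := hUi i hi
        obtain ⟨c, hclt, hcsub⟩ := hdec (η' i) (g β i) (le_of_lt hlt) (hg.1 β hβ i hi)
        exact ⟨c, hclt, fun _ => hcsub⟩
      · exact ⟨0, hμordpos i hi, fun h => absurd h hcase⟩
    choose c hclt hcs using hcex
    obtain ⟨h', hh'eq, hh'In⟩ : ∃ h' : Ordinal.{u} → Ordinal.{u},
        (∀ i (hi : i < ρ.ord), h' i = max (b i hi) (c i hi)) ∧ InProd ρ.ord μ h' :=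
      ⟨fun i => if h : i < ρ.ord then max (b i h) (c i h) else 0,
       fun i hi => dif_pos hi,
       fun i hi => by simp only [dif_pos hi]; exact max_lt (hblt i hi) (hclt i hi)⟩
    obtain ⟨α, hα, i₁, hi₁, hαdom⟩ := hf.2.2 h' hh'In
    have hT : (Set.Iio ρ.ord \ Set.Iio (max i₀ i₁)) ∈ E.sets := htail _ (max_lt hi₀ hi₁)
    have hkey : ∀ i (hi : i < ρ.ord), max i₀ i₁ ≤ i →
        ∀ x, x ∈ A i (g β i) \ Set.Iio (f α i) →
        x ∈ A i (η' i) ∧ ¬ x < b i hi := by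
      intro i hi hge x hx
      have hfx : f α i ≤ x := not_lt.1 hx.2
      have hdom : h' i < f α i := hαdom i (le_trans (le_max_right _ _) hge) hi
      rw [hh'eq i hi] at hdom
      have hcx : c i hi < x := lt_of_le_of_lt (le_max_right _ _) (lt_of_lt_of_le hdom hfx)
      have hbx : b i hi < x := lt_of_le_of_lt (le_max_left _ _) (lt_of_lt_of_le hdom hfx)
      have hxA : x ∈ A i (η' i) := by
        by_contra hno
        exact absurd (hcs i hi (le_trans (le_max_left _ _) hge) ⟨hx.1, hno⟩)
          (not_lt.2 (le_of_lt hcx))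
      exact ⟨hxA, not_lt.2 (le_of_lt hbx)⟩
    rcases E.mem_or_compl_mem
        {i | i < ρ.ord ∧ Z ∩ Set.Iio (μ i).ord ∈ (Ui i).sets}
        (fun i hi => hi.1) with hX | hX
    · refine ⟨{i | i < ρ.ord ∧ Z ∩ Set.Iio (μ i).ord ∈ (Ui i).sets} ∩
        (Set.Iio ρ.ord \ Set.Iio (max i₀ i₁)),
        E.inter_mem _ hX _ hT, α, hα, β, hβ, Or.inl ?_⟩
      intro x hx
      rw [hY] at hx
      simp only [Set.mem_iUnion] at hx
      obtain ⟨i, hiX, hx⟩ := hx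
      obtain ⟨hiX₀, hiT⟩ := hiX
      have hi : i < ρ.ord := hiX₀.1
      have hge : max i₀ i₁ ≤ i := not_lt.1 hiT.2
      have hk := hkey i hi hge x hx
      rcases hdisj i hi with ⟨_, hsub⟩ | ⟨hnot, _⟩
      · have hxZ : x ∈ Z ∩ Set.Iio (μ i).ord := by
          by_contra hno
          exact hk.2 (hsub ⟨(hη'eq i hi) ▸ hk.1, hno⟩)
        exact hxZ.1
      · exact absurd hiX₀.2 hnot
    · refine ⟨(Set.Iio ρ.ord \ {i | i < ρ.ord ∧ Z ∩ Set.Iio (μ i).ord ∈ (Ui i).sets}) ∩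
        (Set.Iio ρ.ord \ Set.Iio (max i₀ i₁)),
        E.inter_mem _ hX _ hT, α, hα, β, hβ, Or.inr ?_⟩
      intro x hx
      rw [hY] at hx
      simp only [Set.mem_iUnion] at hx
      obtain ⟨i, hiX, hx⟩ := hx
      obtain ⟨⟨hi, hiX₀⟩, hiT⟩ := hiX
      have hge : max i₀ i₁ ≤ i := not_lt.1 hiT.2
      have hk := hkey i hi hge x hx
      rcases hdisj i hi with ⟨hmem2, _⟩ | ⟨_, hsub⟩
      · exact absurd (⟨hi, hmem2⟩ : i ∈ {i | i < ρ.ord ∧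
          Z ∩ Set.Iio (μ i).ord ∈ (Ui i).sets}) hiX₀
      · have hxW : x ∈ Set.Iio (μ i).ord \ Z := by
          by_contra hno
          exact hk.2 (hsub ⟨(hη'eq i hi) ▸ hk.1, hno⟩)
        exact ⟨lt_trans hxW.1 (Cardinal.ord_lt_ord.2 (hμlt i hi)), hxW.2⟩
  -- nonemptiness of the Y sets
  have hne : ∀ X, X ∈ E.sets → ∀ α, α < σ.ord → ∀ β, β < τ.ord → (Y X α β).Nonempty := by
    intro X hX α hα β hβ
    have hXne : X.Nonempty := by
      rcases Set.eq_empty_or_nonempty X with rfl | h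
      · exact absurd hX E.empty_not_mem
      · exact h
    obtain ⟨i, hiX⟩ := hXne
    have hi : i < ρ.ord := E.sets_subset X hX hiX
    obtain ⟨hunif, hcomp, hmem, hdec, hbase⟩ := hUi i hi
    have hgθ : g β i < (θ i).ord := hg.1 β hβ i hi
    have hAmem : A i (g β i) ∈ (Ui i).sets := hmem _ hgθ
    have hcard : #(A i (g β i)) = Cardinal.lift.{u+1} (μ i) := hunif _ hAmem
    have hfμ : f α i < (μ i).ord := hf.1 α hα i hi
    have hne' : (A i (g β i) \ Set.Iio (f α i)).Nonempty := by
      rcases Set.eq_empty_or_nonempty (A i (g β i) \ Set.Iio (f α i)) with he | h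
      · exfalso
        have hsub : A i (g β i) ⊆ Set.Iio (f α i) := by
          intro x hx
          by_contra hno
          exact Set.eq_empty_iff_forall_notMem.1 he x ⟨hx, hno⟩
        have hle : Cardinal.lift.{u+1} (μ i) ≤ Cardinal.lift.{u+1} (f α i).card := by
          rw [← hcard, ← Ordinal.mk_Iio_ordinal]
          exact Cardinal.mk_le_mk_of_subset hsub
        exact absurd (Cardinal.lift_le.1 hle) (not_le.2 (Cardinal.lt_ord.1 hfμ))
      · exact h
    obtain ⟨x, hx⟩ := hne'
    refine ⟨x, ?_⟩
    rw [hY]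
    simp only [Set.mem_iUnion]
    exact ⟨i, hiX, hx⟩
  -- Y sets live inside κ
  have hYsub : ∀ X, X ⊆ Set.Iio ρ.ord → ∀ α β, β < τ.ord → Y X α β ⊆ Set.Iio κ.ord := by
    intro X hXsub α β hβ x hx
    rw [hY] at hx
    simp only [Set.mem_iUnion] at hx
    obtain ⟨i, hiX, hx⟩ := hx
    have hi : i < ρ.ord := hXsub hiX
    have hxm := hAsub i hi (g β i) (hg.1 β hβ i hi) hx.1
    exact lt_trans hxm.2 (Cardinal.ord_lt_ord.2 (hμlt i hi))
  -- intersections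
  have hinter : ∀ X1, X1 ∈ E.sets → ∀ X2, X2 ∈ E.sets →
      ∀ α1, α1 < σ.ord → ∀ α2, α2 < σ.ord → ∀ β1, β1 < τ.ord → ∀ β2, β2 < τ.ord →
      ∃ X ∈ E.sets, ∃ α, α < σ.ord ∧ ∃ β, β < τ.ord ∧
        Y X α β ⊆ Y X1 α1 β1 ∩ Y X2 α2 β2 := by
    intro X1 hX1 X2 hX2 α1 hα1 α2 hα2 β1 hβ1 β2 hβ2
    have hβ : max β1 β2 < τ.ord := max_lt hβ1 hβ2
    have hd1 : ∃ j, j < ρ.ord ∧ ∀ i, j ≤ i → i < ρ.ord → g β1 i ≤ g (max β1 β2) i := by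
      rcases eq_or_lt_of_le (le_max_left β1 β2) with heq | hlt
      · exact ⟨0, hρordpos, fun i _ _ => le_of_eq (by rw [← heq])⟩
      · obtain ⟨j, hj, hdom⟩ := hg.2.1 β1 (max β1 β2) hlt hβ
        exact ⟨j, hj, fun i h1 h2 => le_of_lt (hdom i h1 h2)⟩
    have hd2 : ∃ j, j < ρ.ord ∧ ∀ i, j ≤ i → i < ρ.ord → g β2 i ≤ g (max β1 β2) i := by
      rcases eq_or_lt_of_le (le_max_right β1 β2) with heq | hlt
      · exact ⟨0, hρordpos, fun i _ _ => le_of_eq (by rw [← heq])⟩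
      · obtain ⟨j, hj, hdom⟩ := hg.2.1 β2 (max β1 β2) hlt hβ
        exact ⟨j, hj, fun i h1 h2 => le_of_lt (hdom i h1 h2)⟩
    obtain ⟨j1, hj1, hdom1⟩ := hd1
    obtain ⟨j2, hj2, hdom2⟩ := hd2
    have hcex : ∀ i, i < ρ.ord → ∃ c, c < (μ i).ord ∧
        (max j1 j2 ≤ i → (A i (g (max β1 β2) i) \ A i (g β1 i) ⊆ Set.Iio c ∧
                          A i (g (max β1 β2) i) \ A i (g β2 i) ⊆ Set.Iio c)) := by
      intro i hi
      by_cases hcase : max j1 j2 ≤ i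
      · obtain ⟨hunif, hcomp, hmem, hdec, hbase⟩ := hUi i hi
        obtain ⟨c1, hc1, hs1⟩ := hdec (g β1 i) (g (max β1 β2) i)
          (hdom1 i (le_trans (le_max_left _ _) hcase) hi) (hg.1 _ hβ i hi)
        obtain ⟨c2, hc2, hs2⟩ := hdec (g β2 i) (g (max β1 β2) i)
          (hdom2 i (le_trans (le_max_right _ _) hcase) hi) (hg.1 _ hβ i hi)
        refine ⟨max c1 c2, max_lt hc1 hc2, fun _ => ⟨?_, ?_⟩⟩
        · exact fun x hx => Set.mem_Iio.2 (lt_of_lt_of_le (Set.mem_Iio.1 (hs1 hx)) (le_max_left _ _))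
        · exact fun x hx => Set.mem_Iio.2 (lt_of_lt_of_le (Set.mem_Iio.1 (hs2 hx)) (le_max_right _ _))
      · exact ⟨0, hμordpos i hi, fun h => absurd h hcase⟩
    choose c hclt hcs using hcex
    obtain ⟨h', hh'eq, hh'In⟩ : ∃ h' : Ordinal.{u} → Ordinal.{u},
        (∀ i (hi : i < ρ.ord), h' i = max (max (f α1 i) (f α2 i)) (c i hi)) ∧
          InProd ρ.ord μ h' :=
      ⟨fun i => if h : i < ρ.ord then max (max (f α1 i) (f α2 i)) (c i h) else 0,
       fun i hi => dif_pos hi,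
       fun i hi => by
         simp only [dif_pos hi]
         exact max_lt (max_lt (hf.1 α1 hα1 i hi) (hf.1 α2 hα2 i hi)) (hclt i hi)⟩
    obtain ⟨α, hα, i₁, hi₁, hαdom⟩ := hf.2.2 h' hh'In
    refine ⟨X1 ∩ X2 ∩ (Set.Iio ρ.ord \ Set.Iio (max (max j1 j2) i₁)),
      E.inter_mem _ (E.inter_mem _ hX1 _ hX2) _ (htail _ (max_lt (max_lt hj1 hj2) hi₁)),
      α, hα, max β1 β2, hβ, ?_⟩
    intro x hx
    rw [hY] at hx
    simp only [Set.mem_iUnion] at hx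
    obtain ⟨i, ⟨⟨hiX1, hiX2⟩, hiT⟩, hxA, hxf⟩ := hx
    have hi : i < ρ.ord := hiT.1
    have hge : max (max j1 j2) i₁ ≤ i := not_lt.1 hiT.2
    have hdom : h' i < f α i := hαdom i (le_trans (le_max_right _ _) hge) hi
    rw [hh'eq i hi] at hdom
    have hfx : f α i ≤ x := not_lt.1 hxf
    have hcsub := hcs i hi (le_trans (le_max_left _ _) hge)
    have hcx : ¬ x < c i hi :=
      not_lt.2 (le_trans (le_of_lt (lt_of_le_of_lt (le_max_right _ _) hdom)) hfx)
    have hx1 : x ∈ A i (g β1 i) := by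
      by_contra hno
      exact hcx (hcsub.1 ⟨hxA, hno⟩)
    have hx2 : x ∈ A i (g β2 i) := by
      by_contra hno
      exact hcx (hcsub.2 ⟨hxA, hno⟩)
    have hf1x : f α1 i ≤ x :=
      le_trans (le_of_lt (lt_of_le_of_lt (le_trans (le_max_left _ _) (le_max_left _ _))
        hdom)) hfx
    have hf2x : f α2 i ≤ x :=
      le_trans (le_of_lt (lt_of_le_of_lt (le_trans (le_max_right _ _) (le_max_left _ _))
        hdom)) hfx
    constructor
    · rw [hY]
      simp only [Set.mem_iUnion]
      exact ⟨i, hiX1, hx1, not_lt.2 hf1x⟩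
    · rw [hY]
      simp only [Set.mem_iUnion]
      exact ⟨i, hiX2, hx2, not_lt.2 hf2x⟩
  refine ⟨main, ⟨⟨{Z | Z ⊆ Set.Iio κ.ord ∧
      ∃ X ∈ E.sets, ∃ α, α < σ.ord ∧ ∃ β, β < τ.ord ∧ Y X α β ⊆ Z},
      ?_, ?_, ?_, ?_, ?_, ?_⟩, rfl⟩⟩
  · exact fun Z hZ => hZ.1
  · exact ⟨Set.Subset.rfl, Set.Iio ρ.ord, E.univ_mem, 0, hσ0, 0, hτ0,
      hYsub _ Set.Subset.rfl 0 0 hτ0⟩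
  · intro Z1 hZ1 Z2 hZ2sub hsub
    obtain ⟨_, X, hX, α, hα, β, hβ', hYZ⟩ := hZ1
    exact ⟨hZ2sub, X, hX, α, hα, β, hβ', Set.Subset.trans hYZ hsub⟩
  · intro Z1 hZ1 Z2 hZ2
    obtain ⟨hZ1s, X1, hX1, α1, hα1, β1, hβ1, hY1⟩ := hZ1
    obtain ⟨hZ2s, X2, hX2, α2, hα2, β2, hβ2, hY2⟩ := hZ2
    obtain ⟨X, hX, α, hα, β, hβ', hYY⟩ := hinter X1 hX1 X2 hX2 α1 hα1 α2 hα2 β1 hβ1 β2 hβ2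
    exact ⟨fun x hx => hZ1s hx.1, X, hX, α, hα, β, hβ',
      Set.Subset.trans hYY (Set.inter_subset_inter hY1 hY2)⟩
  · intro h
    obtain ⟨_, X, hX, α, hα, β, hβ', hsub⟩ := h
    obtain ⟨x, hx⟩ := hne X hX α hα β hβ'
    exact hsub hx
  · intro Z' hZ'
    obtain ⟨X, hX, α, hα, β, hβ', hor⟩ := main Z' hZ'
    rcases hor with h | h
    · exact Or.inl ⟨hZ', X, hX, α, hα, β, hβ', h⟩
    · exact Or.inr ⟨Set.diff_subset, X, hX, α, hα, β, hβ', h⟩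
end

section
/- Let κ be a regular uncountable cardinal and let U be a uniform ultrafilter on κ. If U has an almost-decreasing generating sequence, then U is κ-complete, i.e. U is closed under intersections of fewer than κ many of its members; in particular U is a κ-complete nonprincipal ultrafilter on κ, so κ is a measurable cardinal. -/
universe u

open Cardinal Set

section Statement6Aux

variable {κ : Cardinal.{u}}

theorem aux_card_lt_of_bounded {B : Set Ordinal.{u}} {β : Ordinal.{u}}
    (hB : B ⊆ Set.Iio β) (hβ : β < κ.ord) : #B < Cardinal.lift.{u + 1} κ := by
  calc #B ≤ #(Set.Iio β) := Cardinal.mk_le_mk_of_subset hB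
    _ = Cardinal.lift.{u + 1} β.card := Ordinal.mk_Iio_ordinal β
    _ < Cardinal.lift.{u + 1} κ := Cardinal.lift_lt.2 (Cardinal.lt_ord.1 hβ)

theorem aux_exists_bound (hκreg : κ.IsRegular) (R : Set Ordinal.{u})
    (hsub : ∀ x ∈ R, x < κ.ord) (hcard : #R < Cardinal.lift.{u + 1} κ) :
    ∃ b, b < κ.ord ∧ ∀ x ∈ R, x < b := by
  have hsmall : Small.{u} R :=
    @small_subset _ _ _ (fun x hx => hsub x hx : R ⊆ Set.Iio κ.ord) (Ordinal.small_Iio _)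
  let e := equivShrink (↥R)
  let f : Shrink.{u} (↥R) → Ordinal.{u} := fun y => ((e.symm y : ↥R) : Ordinal)
  have hflt : ∀ y, f y < κ.ord := fun y => hsub _ (e.symm y).2
  have hcard' : #(Shrink.{u} (↥R)) < κ := by
    have h1 : Cardinal.lift.{u + 1} #(Shrink.{u} (↥R)) = #(↥R) :=
      Cardinal.lift_mk_shrink''.{u + 1, u} (↥R)
    rw [← Cardinal.lift_lt.{u, u + 1}, h1]
    exact hcard
  have hcof : #(Shrink.{u} (↥R)) < (κ.ord).cof := by rwa [hκreg.cof_eq]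
  have hsup : iSup f < κ.ord := Ordinal.iSup_lt_ord hcof hflt
  refine ⟨iSup f + 1, ?_, ?_⟩
  · rw [Ordinal.add_one_eq_succ]
    exact (Cardinal.isSuccLimit_ord hκreg.aleph0_le).succ_lt hsup
  · intro x hx
    have hx' : f (e ⟨x, hx⟩) = x := by simp [f, e]
    have hle : x ≤ iSup f := by
      rw [← hx']
      exact le_ciSup (Ordinal.bddAbove_range f) _
    rw [Ordinal.add_one_eq_succ]
    exact Order.lt_succ_iff.mpr hle

theorem aux_sSup_lt (hκreg : κ.IsRegular) (R : Set Ordinal.{u})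
    (hsub : ∀ x ∈ R, x < κ.ord) (hcard : #R < Cardinal.lift.{u + 1} κ) :
    sSup R < κ.ord := by
  obtain ⟨b, hb, hbR⟩ := aux_exists_bound hκreg R hsub hcard
  exact lt_of_le_of_lt (csSup_le' fun x hx => (hbR x hx).le) hb

theorem aux_mem_unbounded (hκreg : κ.IsRegular) {U : UltrafilterOn κ}
    (hU : U.IsUniform) {A : Set Ordinal.{u}} (hA : A ∈ U.sets) :
    ∀ d, d < κ.ord → ∃ x ∈ A, d < x := by
  intro d hd
  by_contra hc
  push_neg at hc
  have hsub : A ⊆ Set.Iio (d + 1) := by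
    intro x hx
    have h1 := hc x hx
    have : x < d + 1 := by
      rw [Ordinal.add_one_eq_succ]; exact Order.lt_succ_iff.mpr h1
    exact this
  have hd1 : d + 1 < κ.ord := by
    rw [Ordinal.add_one_eq_succ]
    exact (Cardinal.isSuccLimit_ord hκreg.aleph0_le).succ_lt hd
  have hlt : #A < Cardinal.lift.{u + 1} κ := aux_card_lt_of_bounded hsub hd1
  rw [hU A hA] at hlt
  exact lt_irrefl _ hlt

theorem aux_cobounded_mem {U : UltrafilterOn κ} (hU : U.IsUniform)
    {d : Ordinal.{u}} (hd : d < κ.ord) : Set.Iio κ.ord \ Set.Iio d ∈ U.sets := by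
  rcases U.mem_or_compl_mem (Set.Iio d) (fun x hx => lt_of_lt_of_le hx hd.le) with hmem | hmem
  · exfalso
    have h1 := hU _ hmem
    have h2 : #(Set.Iio d) < Cardinal.lift.{u + 1} κ :=
      aux_card_lt_of_bounded (subset_refl _) hd
    rw [h1] at h2
    exact lt_irrefl _ h2
  · exact hmem

theorem aux_almostSub_trans {A B C : Set Ordinal.{u}} (h1 : AlmostSub κ A B)
    (h2 : AlmostSub κ B C) : AlmostSub κ A C := by
  obtain ⟨b1, hb1, hs1⟩ := h1
  obtain ⟨b2, hb2, hs2⟩ := h2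
  refine ⟨max b1 b2, ?_, ?_⟩
  · exact max_lt hb1 hb2
  · intro x hx
    by_cases hB : x ∈ B
    · exact Set.mem_Iio.2 (lt_of_lt_of_le (Set.mem_Iio.1 (hs2 ⟨hB, hx.2⟩)) (le_max_right _ _))
    · exact Set.mem_Iio.2 (lt_of_lt_of_le (Set.mem_Iio.1 (hs1 ⟨hx.1, hB⟩)) (le_max_left _ _))

noncomputable def auxDelta (step : Ordinal.{u} → Ordinal.{u}) : Ordinal.{u} → Ordinal.{u} :=
  Ordinal.lt_wf.fix fun α IH => sSup (Set.range fun β : Set.Iio α => step (IH β.1 β.2))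

theorem auxDelta_def (step : Ordinal.{u} → Ordinal.{u}) (α : Ordinal.{u}) :
    auxDelta step α = sSup (Set.range fun β : Set.Iio α => step (auxDelta step β.1)) :=
  Ordinal.lt_wf.fix_eq _ α

theorem aux_split (hκreg : κ.IsRegular) (U : UltrafilterOn κ)
    (hU : U.IsUniform) {ι : Type (u + 1)} [Nonempty ι]
    (hicard : #ι < Cardinal.lift.{u + 1} κ)
    (Aset : ι → Set Ordinal.{u}) (hAmem : ∀ X, Aset X ∈ U.sets) :
    ∃ Xset : Set Ordinal.{u}, Xset ⊆ Set.Iio κ.ord ∧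
      (∀ X, ∀ b, b < κ.ord → ∃ x, x ∈ Xset ∧ x ∈ Aset X ∧ b ≤ x) ∧
      (∀ X, ∀ b, b < κ.ord → ∃ x, x ∉ Xset ∧ x ∈ Aset X ∧ b ≤ x) := by
  classical
  have hlim : Order.IsSuccLimit κ.ord := Cardinal.isSuccLimit_ord hκreg.aleph0_le
  have hunb : ∀ X, ∀ d, d < κ.ord → ∃ x ∈ Aset X, d < x :=
    fun X => aux_mem_unbounded hκreg hU (hAmem X)
  have hAsub : ∀ X, Aset X ⊆ Set.Iio κ.ord := fun X => U.sets_subset _ (hAmem X)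
  set p : Ordinal.{u} → ι → Ordinal.{u} := fun d X => sInf (Aset X ∩ Set.Ioi d) with hpdef
  set efn : Ordinal.{u} → Ordinal.{u} := fun d => sSup (Set.range (p d)) + 1 with hefndef
  set q : Ordinal.{u} → ι → Ordinal.{u} := fun d X => sInf (Aset X ∩ Set.Ioi (efn d))
    with hqdef
  set step : Ordinal.{u} → Ordinal.{u} := fun d => sSup (Set.range (q d)) + 1 with hstepdef
  set δ : Ordinal.{u} → Ordinal.{u} := auxDelta step with hδdef
  -- facts about p
  have hpspec : ∀ d X, d < κ.ord → p d X ∈ Aset X ∧ d < p d X := by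
    intro d X hd
    obtain ⟨x, hx, hdx⟩ := hunb X d hd
    have hne : (Aset X ∩ Set.Ioi d).Nonempty := ⟨x, hx, hdx⟩
    have := csInf_mem hne
    exact ⟨this.1, this.2⟩
  have hplt : ∀ d X, d < κ.ord → p d X < κ.ord :=
    fun d X hd => hAsub X (hpspec d X hd).1
  have hbddp : ∀ d, d < κ.ord → BddAbove (Set.range (p d)) := by
    intro d hd
    refine ⟨κ.ord, ?_⟩
    rintro x ⟨X, rfl⟩
    exact (hplt d X hd).le
  have hsupp : ∀ d, d < κ.ord → sSup (Set.range (p d)) < κ.ord := by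
    intro d hd
    refine aux_sSup_lt hκreg _ ?_ (lt_of_le_of_lt Cardinal.mk_range_le hicard)
    rintro x ⟨X, rfl⟩
    exact hplt d X hd
  have hefnlt : ∀ d, d < κ.ord → efn d < κ.ord := by
    intro d hd
    simp only [hefndef]
    rw [Ordinal.add_one_eq_succ]
    exact hlim.succ_lt (hsupp d hd)
  have hdefn : ∀ d, d < κ.ord → d < efn d := by
    intro d hd
    obtain ⟨X0⟩ := (inferInstance : Nonempty ι)
    have h1 : d < p d X0 := (hpspec d X0 hd).2
    have h2 : p d X0 ≤ sSup (Set.range (p d)) := le_csSup (hbddp d hd) ⟨X0, rfl⟩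
    have h3 : sSup (Set.range (p d)) < efn d := by
      simp only [hefndef]
      rw [Ordinal.add_one_eq_succ]; exact Order.lt_succ _
    exact h1.trans_le (h2.trans h3.le)
  -- facts about q
  have hqspec : ∀ d X, d < κ.ord → q d X ∈ Aset X ∧ efn d < q d X := by
    intro d X hd
    obtain ⟨x, hx, hdx⟩ := hunb X (efn d) (hefnlt d hd)
    have hne : (Aset X ∩ Set.Ioi (efn d)).Nonempty := ⟨x, hx, hdx⟩
    have := csInf_mem hne
    exact ⟨this.1, this.2⟩
  have hqlt : ∀ d X, d < κ.ord → q d X < κ.ord :=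
    fun d X hd => hAsub X (hqspec d X hd).1
  have hbddq : ∀ d, d < κ.ord → BddAbove (Set.range (q d)) := by
    intro d hd
    refine ⟨κ.ord, ?_⟩
    rintro x ⟨X, rfl⟩
    exact (hqlt d X hd).le
  have hsupq : ∀ d, d < κ.ord → sSup (Set.range (q d)) < κ.ord := by
    intro d hd
    refine aux_sSup_lt hκreg _ ?_ (lt_of_le_of_lt Cardinal.mk_range_le hicard)
    rintro x ⟨X, rfl⟩
    exact hqlt d X hd
  have hsteplt : ∀ d, d < κ.ord → step d < κ.ord := by
    intro d hd
    simp only [hstepdef]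
    rw [Ordinal.add_one_eq_succ]
    exact hlim.succ_lt (hsupq d hd)
  have hqstep : ∀ d X, d < κ.ord → q d X < step d := by
    intro d X hd
    have h2 : q d X ≤ sSup (Set.range (q d)) := le_csSup (hbddq d hd) ⟨X, rfl⟩
    have h3 : sSup (Set.range (q d)) < step d := by
      simp only [hstepdef]
      rw [Ordinal.add_one_eq_succ]; exact Order.lt_succ _
    exact h2.trans_lt h3
  have hdstep : ∀ d, d < κ.ord → d < step d := by
    intro d hd
    obtain ⟨X0⟩ := (inferInstance : Nonempty ι)
    exact ((hdefn d hd).trans (hqspec d X0 hd).2).trans (hqstep d X0 hd)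
  -- monotonicity
  have hpmono : ∀ d d' X, d ≤ d' → d' < κ.ord → p d X ≤ p d' X := by
    intro d d' X hdd' hd'
    obtain ⟨x, hx, hdx⟩ := hunb X d' hd'
    refine csInf_le_csInf (OrderBot.bddBelow _) ⟨x, hx, hdx⟩ ?_
    rintro y ⟨hy1, hy2⟩
    exact ⟨hy1, lt_of_le_of_lt hdd' hy2⟩
  have hefnmono : ∀ d d', d ≤ d' → d' < κ.ord → efn d ≤ efn d' := by
    intro d d' hdd' hd'
    have h1 : sSup (Set.range (p d)) ≤ sSup (Set.range (p d')) := by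
      refine csSup_le' ?_
      rintro x ⟨X, rfl⟩
      exact (hpmono d d' X hdd' hd').trans (le_csSup (hbddp d' hd') ⟨X, rfl⟩)
    simp only [hefndef]
    exact add_le_add_left h1 1
  -- facts about δ
  have hδeq : ∀ α, δ α = sSup (Set.range fun β : Set.Iio α => step (δ β.1)) := by
    intro α
    rw [hδdef]
    exact auxDelta_def step α
  have hδlt : ∀ α, α < κ.ord → δ α < κ.ord := by
    intro α
    induction α using Ordinal.induction with
    | _ α IH =>
      intro hα
      rw [hδeq α]
      refine aux_sSup_lt hκreg _ ?_ ?_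
      · rintro x ⟨⟨β, hβ⟩, rfl⟩
        exact hsteplt _ (IH β hβ (hβ.trans hα))
      · refine lt_of_le_of_lt Cardinal.mk_range_le ?_
        rw [Ordinal.mk_Iio_ordinal]
        exact Cardinal.lift_lt.2 (Cardinal.lt_ord.1 hα)
  have hstepδle : ∀ β α, β < α → α < κ.ord → step (δ β) ≤ δ α := by
    intro β α hβα hα
    have hbdd : BddAbove (Set.range fun γ : Set.Iio α => step (δ γ.1)) := by
      refine ⟨κ.ord, ?_⟩
      rintro x ⟨⟨γ, hγ⟩, rfl⟩
      exact (hsteplt _ (hδlt γ (hγ.trans hα))).le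
    have : step (δ β) ≤ sSup (Set.range fun γ : Set.Iio α => step (δ γ.1)) :=
      le_csSup hbdd ⟨⟨β, hβα⟩, rfl⟩
    rw [hδeq α]
    exact this
  have hδsmono : ∀ β α, β < α → α < κ.ord → δ β < δ α := by
    intro β α hβα hα
    exact lt_of_lt_of_le (hdstep _ (hδlt β (hβα.trans hα))) (hstepδle β α hβα hα)
  have hδmono : ∀ β α, β ≤ α → α < κ.ord → δ β ≤ δ α := by
    intro β α hβα hα
    rcases lt_or_eq_of_le hβα with h | h
    · exact (hδsmono β α h hα).le
    · rw [h]
  have hδge : ∀ α, α < κ.ord → α ≤ δ α := by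
    intro α
    induction α using Ordinal.induction with
    | _ α IH =>
      intro hα
      by_contra hcon
      push_neg at hcon
      have h1 : δ α ≤ δ (δ α) := IH (δ α) hcon (hcon.trans hα)
      have h2 : δ (δ α) < δ α := hδsmono (δ α) α hcon hα
      exact absurd (h1.trans_lt h2) (lt_irrefl _)
  -- the splitting set
  refine ⟨{x | ∃ α, α < κ.ord ∧ ∃ X : ι, x = p (δ α) X}, ?_, ?_, ?_⟩
  · rintro x ⟨α, hα, X, rfl⟩
    exact hAsub X (hpspec (δ α) X (hδlt α hα)).1
  · intro X b hb
    refine ⟨p (δ b) X, ⟨b, hb, X, rfl⟩, (hpspec (δ b) X (hδlt b hb)).1, ?_⟩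
    exact (hδge b hb).trans (hpspec (δ b) X (hδlt b hb)).2.le
  · intro X b hb
    have hδb : δ b < κ.ord := hδlt b hb
    refine ⟨q (δ b) X, ?_, (hqspec (δ b) X hδb).1, ?_⟩
    · rintro ⟨α, hα, X', heq⟩
      rcases le_or_gt α b with hle | hlt
      · -- α ≤ b : p (δ α) X' < q (δ b) X
        have h1 : p (δ α) X' ≤ p (δ b) X' := hpmono (δ α) (δ b) X' (hδmono α b hle hb) hδb
        have h2 : p (δ b) X' ≤ sSup (Set.range (p (δ b))) := le_csSup (hbddp _ hδb) ⟨X', rfl⟩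
        have h3 : sSup (Set.range (p (δ b))) < efn (δ b) := by
          simp only [hefndef]
          rw [Ordinal.add_one_eq_succ]; exact Order.lt_succ _
        have h4 : efn (δ b) < q (δ b) X := (hqspec (δ b) X hδb).2
        have : p (δ α) X' < q (δ b) X := ((h1.trans h2).trans_lt h3).trans h4
        rw [← heq] at this
        exact lt_irrefl _ this
      · -- b < α : q (δ b) X < p (δ α) X'
        have hb1 : b + 1 < κ.ord := by
          rw [Ordinal.add_one_eq_succ]; exact hlim.succ_lt hb
        have h1 : q (δ b) X < step (δ b) := hqstep (δ b) X hδb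
        have h2 : step (δ b) ≤ δ (b + 1) := by
          refine hstepδle b (b + 1) ?_ hb1
          rw [Ordinal.add_one_eq_succ]; exact Order.lt_succ _
        have h3 : δ (b + 1) ≤ δ α := by
          refine hδmono (b + 1) α ?_ hα
          rw [Ordinal.add_one_eq_succ]; exact Order.succ_le_of_lt hlt
        have h4 : δ α < p (δ α) X' := (hpspec (δ α) X' (hδlt α hα)).2
        have : q (δ b) X < p (δ α) X' := ((h1.trans_le h2).trans_le h3).trans h4
        rw [← heq] at this
        exact lt_irrefl _ this
    · exact (hδge b hb).trans (((hdefn (δ b) hδb).trans (hqspec (δ b) X hδb).2).le)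

end Statement6Aux

/-- a uniform ultrafilter on a regular uncountable cardinal `κ` with an
almost-decreasing generating sequence is `κ`-complete; in particular it is a `κ`-complete
nonprincipal ultrafilter on `κ`, so `κ` is a measurable cardinal. -/
theorem statement6 (κ : Cardinal.{u}) (hκreg : κ.IsRegular) (hκunc : ℵ₀ < κ)
    (U : UltrafilterOn κ) (hU : U.IsUniform)
    (h : ∃ (θord : Ordinal.{u}) (A : Ordinal.{u} → Set Ordinal.{u}), U.IsADGenSeq θord A) :
    U.IsComplete ∧ U.IsNonprincipal ∧ IsMeasurableCard κ := by
  classical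
  obtain ⟨θ, A, hmem, hdec, hbase⟩ := h
  obtain ⟨hBsub, hBgen⟩ := hbase
  have hcomplete : U.IsComplete := by
    intro S hSne hSU hScard
    haveI : Nonempty ↥S := hSne.to_subtype
    have hidx : ∀ X : ↥S, ∃ i, i < θ ∧ AlmostSub κ (A i) X.1 := by
      intro X
      obtain ⟨Y, hY, hYX⟩ := hBgen X.1 (hSU X.2)
      obtain ⟨i, hi, rfl⟩ := hY
      exact ⟨i, hi, hYX⟩
    choose idx hidxlt hidxsub using hidx
    by_cases hcase : ∃ j, j < θ ∧ ∀ X : ↥S, idx X ≤ j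
    · -- bounded case: a single A j works
      obtain ⟨j, hjθ, hjb⟩ := hcase
      have hAj : ∀ X : ↥S, AlmostSub κ (A j) X.1 := fun X =>
        aux_almostSub_trans (hdec (idx X) j (hjb X) hjθ) (hidxsub X)
      choose bnd hbndlt hbndsub using hAj
      obtain ⟨b, hbκ, hbR⟩ := aux_exists_bound hκreg (Set.range bnd)
        (by rintro x ⟨X, rfl⟩; exact hbndlt X)
        (lt_of_le_of_lt Cardinal.mk_range_le hScard)
      have hkey : A j ∩ (Set.Iio κ.ord \ Set.Iio b) ⊆ ⋂₀ S := by
        rintro x ⟨hxA, -, hxb⟩ X hX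
        by_contra hxX
        have h1 : x ∈ A j \ X := ⟨hxA, hxX⟩
        have h2 : x < bnd ⟨X, hX⟩ := hbndsub ⟨X, hX⟩ h1
        have h3 : bnd ⟨X, hX⟩ < b := hbR _ ⟨⟨X, hX⟩, rfl⟩
        exact hxb (h2.trans h3)
      have hmem2 : A j ∩ (Set.Iio κ.ord \ Set.Iio b) ∈ U.sets :=
        U.inter_mem _ (hmem j hjθ) _ (aux_cobounded_mem hU hbκ)
      obtain ⟨X0, hX0⟩ := hSne
      refine U.superset_mem _ hmem2 _ ?_ hkey
      intro x hx
      exact U.sets_subset X0 (hSU hX0) (hx X0 hX0)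
    · -- unbounded case: impossible, by the splitting construction
      exfalso
      push_neg at hcase
      obtain ⟨Xset, hXsub, hs1, hs2⟩ := aux_split hκreg U hU hScard
        (fun X : ↥S => A (idx X)) (fun X => hmem _ (hidxlt X))
      rcases U.mem_or_compl_mem Xset hXsub with hXU | hXU
      · obtain ⟨Y, hY, hYX⟩ := hBgen Xset hXU
        obtain ⟨j, hjθ, rfl⟩ := hY
        obtain ⟨X, hjX⟩ := hcase j hjθ
        have h2 : AlmostSub κ (A (idx X)) Xset :=
          aux_almostSub_trans (hdec j (idx X) hjX.le (hidxlt X)) hYX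
        obtain ⟨b, hbκ, hbsub⟩ := h2
        obtain ⟨x, hxX, hxA, hbx⟩ := hs2 X b hbκ
        exact absurd (hbsub ⟨hxA, hxX⟩) (not_lt.mpr hbx)
      · obtain ⟨Y, hY, hYX⟩ := hBgen _ hXU
        obtain ⟨j, hjθ, rfl⟩ := hY
        obtain ⟨X, hjX⟩ := hcase j hjθ
        have h2 : AlmostSub κ (A (idx X)) (Set.Iio κ.ord \ Xset) :=
          aux_almostSub_trans (hdec j (idx X) hjX.le (hidxlt X)) hYX
        obtain ⟨b, hbκ, hbsub⟩ := h2
        obtain ⟨x, hxX, hxA, hbx⟩ := hs1 X b hbκ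
        have hnot : x ∉ Set.Iio κ.ord \ Xset := fun hc => hc.2 hxX
        exact absurd (hbsub ⟨hxA, hnot⟩) (not_lt.mpr hbx)
  have hnp : U.IsNonprincipal := by
    intro β hβ
    have h1 := hU _ hβ
    rw [Cardinal.mk_singleton] at h1
    have h2 : (1 : Cardinal.{u + 1}) < Cardinal.lift.{u + 1} κ := by
      have := Cardinal.one_lt_aleph0.trans hκunc
      calc (1 : Cardinal.{u + 1}) = Cardinal.lift.{u + 1} 1 := by rw [Cardinal.lift_one]
        _ < Cardinal.lift.{u + 1} κ := Cardinal.lift_lt.2 this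
    exact absurd h1 h2.ne
  exact ⟨hcomplete, hnp, hκunc, U, hcomplete, hnp⟩
end
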